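/- arXiv:1509.00388 — 2 statements merged into one kernel-verified Lean document; each statement's English description precedes it below -/
import Mathlib

section
/- Let p₁, p₂, p₃ and q₁, q₂, q₃ be six pairwise distinct points in ℝ² with no three of the six points collinear. Then the number of points at which an open edge segment of the triangle p₁p₂p₃ meets an open edge segment of the triangle q₁q₂q₃ is even. -/
/-- The open straight-line segment representing an edge (an unordered pair of
vertices) in a straight-line drawing `ρ`. -/
def edgeSeg {V : Type*} (ρ : V → ℝ × ℝ) : Sym2 V → Set (ℝ × ℝ) :=
  Sym2.lift ⟨fun u v => openSegment ℝ (ρ u) (ρ v),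
    fun u v => openSegment_symm ℝ (ρ u) (ρ v)⟩

/-- Two edges *cross* in the drawing `ρ`: they share no endpoint and
their open segments meet. -/
def Crosses {V : Type*} (ρ : V → ℝ × ℝ) (e f : Sym2 V) : Prop :=
  (∀ v : V, v ∈ e → v ∉ f) ∧ (edgeSeg ρ e ∩ edgeSeg ρ f).Nonempty

/-- `ρ` is a straight-line drawing of the simple graph `G`. -/
structure IsStraightLineDrawing {V : Type*} (G : SimpleGraph V) (ρ : V → ℝ × ℝ) : Prop where
  inj : Function.Injective ρ
  no_vertex_on_edge : ∀ e ∈ G.edgeSet, ∀ v : V, v ∉ e → ρ v ∉ edgeSeg ρ e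
  meet_at_most_once : ∀ e ∈ G.edgeSet, ∀ f ∈ G.edgeSet, (∀ v : V, v ∈ e → v ∉ f) →
    (edgeSeg ρ e ∩ edgeSeg ρ f).Subsingleton

/-- `ρ` is an IC-planar straight-line drawing of `G`: it is a straight-line drawing,
each edge crosses at most one other edge, and the crossed edges form a matching. -/
def IsICPlanarDrawing {V : Type*} (G : SimpleGraph V) (ρ : V → ℝ × ℝ) : Prop :=
  IsStraightLineDrawing G ρ ∧
  (∀ e ∈ G.edgeSet, ∀ f ∈ G.edgeSet, ∀ g ∈ G.edgeSet,
    Crosses ρ e f → Crosses ρ e g → f = g) ∧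
  (∀ e ∈ G.edgeSet, ∀ f ∈ G.edgeSet,
    (∃ e' ∈ G.edgeSet, Crosses ρ e e') → (∃ f' ∈ G.edgeSet, Crosses ρ f f') →
    e ≠ f → ∀ v : V, v ∈ e → v ∉ f)

/-- All vertices are placed at integer coordinates. -/
def IsGridDrawing {V : Type*} (ρ : V → ℝ × ℝ) : Prop :=
  ∀ v : V, ∃ a b : ℤ, ρ v = ((a : ℝ), (b : ℝ))

/-- `ρ` is a RAC drawing of `G`: any two crossing edges are perpendicular. -/
def IsRACDrawing {V : Type*} (G : SimpleGraph V) (ρ : V → ℝ × ℝ) : Prop :=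
  ∀ e ∈ G.edgeSet, ∀ f ∈ G.edgeSet, Crosses ρ e f →
    ∀ a b c d : V, e = s(a, b) → f = s(c, d) →
      ((ρ b).1 - (ρ a).1) * ((ρ d).1 - (ρ c).1)
        + ((ρ b).2 - (ρ a).2) * ((ρ d).2 - (ρ c).2) = 0

open Set

namespace TwoTri

/-- 2x2 determinant: sign of z relative to directed line a→b. -/
def dt (a b z : ℝ × ℝ) : ℝ := (b.1 - a.1) * (z.2 - a.2) - (b.2 - a.2) * (z.1 - a.1)

lemma dt_self_left (a b : ℝ × ℝ) : dt a b a = 0 := by simp [dt]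

lemma dt_self_right (a b : ℝ × ℝ) : dt a b b = 0 := by simp [dt]; ring

lemma dt_affine (a b x y : ℝ × ℝ) (t : ℝ) :
    dt a b ((1 - t) • x + t • y) = (1 - t) * dt a b x + t * dt a b y := by
  simp [dt, Prod.fst_add, Prod.snd_add, Prod.smul_fst, Prod.smul_snd, smul_eq_mul]
  ring

lemma mem_openSegment'' {x y z : ℝ × ℝ} :
    z ∈ openSegment ℝ x y ↔ ∃ t, t ∈ Ioo (0:ℝ) 1 ∧ z = (1 - t) • x + t • y := by
  rw [openSegment_eq_image]
  constructor
  · rintro ⟨t, ht, rfl⟩; exact ⟨t, ht, rfl⟩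
  · rintro ⟨t, ht, rfl⟩; exact ⟨t, ht, rfl⟩

lemma exists_param {a b z : ℝ × ℝ} (h : dt a b z = 0) (hab : a ≠ b) :
    ∃ s : ℝ, z = (1 - s) • a + s • b := by
  have hab' : a.1 ≠ b.1 ∨ a.2 ≠ b.2 := by
    by_contra hc
    push_neg at hc
    exact hab (Prod.ext hc.1 hc.2)
  unfold dt at h
  rcases hab' with h1 | h2
  · refine ⟨(z.1 - a.1) / (b.1 - a.1), ?_⟩
    have hne : b.1 - a.1 ≠ 0 := sub_ne_zero.2 (Ne.symm h1)
    apply Prod.ext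
    · simp [Prod.fst_add, Prod.smul_fst, smul_eq_mul]
      field_simp
      ring
    · simp [Prod.snd_add, Prod.smul_snd, smul_eq_mul]
      field_simp
      nlinarith [h]
  · refine ⟨(z.2 - a.2) / (b.2 - a.2), ?_⟩
    have hne : b.2 - a.2 ≠ 0 := sub_ne_zero.2 (Ne.symm h2)
    apply Prod.ext
    · simp [Prod.fst_add, Prod.smul_fst, smul_eq_mul]
      field_simp
      nlinarith [h]
    · simp [Prod.snd_add, Prod.smul_snd, smul_eq_mul]
      field_simp
      ring

lemma collinear_of_dt_eq_zero {a b z : ℝ × ℝ} (h : dt a b z = 0) :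
    Collinear ℝ ({a, b, z} : Set (ℝ × ℝ)) := by
  by_cases hab : a = b
  · subst hab
    have : ({a, a, z} : Set (ℝ × ℝ)) = {a, z} := by
      simp [Set.insert_comm]
    rw [this]
    exact collinear_pair ℝ a z
  · obtain ⟨s, rfl⟩ := exists_param h hab
    have h1 : ({a, b, (1-s) • a + s • b} : Set (ℝ × ℝ)) =
        insert ((1-s) • a + s • b) {a, b} := by
      ext w; simp; tauto
    rw [h1]
    apply collinear_insert_of_mem_affineSpan_pair
    have : (1 - s) • a + s • b = AffineMap.lineMap a b s := by
      rw [AffineMap.lineMap_apply_module]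
    rw [this]
    exact AffineMap.lineMap_mem_affineSpan_pair s a b

/-- Characterization of the open edge of a triangle by determinant signs. -/
lemma mem_openSegment_iff_dt {a b c z : ℝ × ℝ} (h2 : dt b c a ≠ 0) (h3 : dt c a b ≠ 0) :
    z ∈ openSegment ℝ a b ↔
      dt a b z = 0 ∧ 0 < dt b c a * dt b c z ∧ 0 < dt c a b * dt c a z := by
  have hab : a ≠ b := by
    rintro rfl
    exact h2 (dt_self_left a c)
  constructor
  · rw [mem_openSegment'']
    rintro ⟨t, ⟨ht0, ht1⟩, rfl⟩
    refine ⟨?_, ?_, ?_⟩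
    · rw [dt_affine, dt_self_left, dt_self_right]; ring
    · rw [dt_affine, dt_self_left]
      nlinarith [mul_self_pos.2 h2]
    · rw [dt_affine, dt_self_right]
      nlinarith [mul_self_pos.2 h3]
  · rintro ⟨hz, hp2, hp3⟩
    obtain ⟨s, rfl⟩ := exists_param hz hab
    rw [dt_affine, dt_self_left] at hp2
    rw [dt_affine, dt_self_right] at hp3
    rw [mem_openSegment'']
    refine ⟨s, ⟨?_, ?_⟩, rfl⟩
    · nlinarith [mul_self_pos.2 h3]
    · nlinarith [mul_self_pos.2 h2]



open Classical in
/-- indicator count of a proposition -/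
noncomputable def cnt (P : Prop) : ℕ := if P then 1 else 0

lemma cnt_true {P : Prop} (h : P) : cnt P = 1 := by simp [cnt, h]
lemma cnt_false {P : Prop} (h : ¬P) : cnt P = 0 := by simp [cnt, h]

/-- affine interpolation -/
def aff (r s t : ℝ) : ℝ := (1 - t) * r + t * s
/-- the root of the affine interpolation -/
noncomputable def rt (r s : ℝ) : ℝ := r / (r - s)

lemma aff_pos {r s : ℝ} (hr : 0 < r) (hs : 0 < s) {t : ℝ} (h0 : 0 ≤ t) (h1 : t ≤ 1) :
    0 < aff r s t := by
  unfold aff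
  rcases lt_or_ge t 1 with h | h
  · have h1' := mul_pos (by linarith : (0:ℝ) < 1 - t) hr
    have h2' := mul_nonneg h0 hs.le
    linarith
  · have ht : t = 1 := le_antisymm h1 h
    subst ht; nlinarith

lemma aff_neg {r s : ℝ} (hr : r < 0) (hs : s < 0) {t : ℝ} (h0 : 0 ≤ t) (h1 : t ≤ 1) :
    aff r s t < 0 := by
  unfold aff
  rcases lt_or_ge t 1 with h | h
  · have h1' := mul_neg_of_pos_of_neg (by linarith : (0:ℝ) < 1 - t) hr
    have h2' := mul_nonpos_of_nonneg_of_nonpos h0 hs.le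
    linarith
  · have ht : t = 1 := le_antisymm h1 h
    subst ht; nlinarith

lemma pos_iff_of_mul_pos {r s : ℝ} (h : 0 < r * s) : 0 < r ↔ 0 < s := by
  constructor <;> intro h' <;> nlinarith

lemma mixed_ne {r s : ℝ} (hm : r * s < 0) : r ≠ s := by intro h; subst h; nlinarith [mul_self_nonneg r]

lemma mixed_iff {r s : ℝ} (hm : r * s < 0) : 0 < s ↔ ¬(0 < r) := by
  constructor
  · intro h' h''; nlinarith
  · intro h'
    rcases lt_trichotomy r 0 with h | h | h
    · nlinarith
    · exfalso; rw [h] at hm; nlinarith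
    · exact absurd h h'

lemma rt_mem {r s : ℝ} (hm : r * s < 0) : rt r s ∈ Ioo (0:ℝ) 1 := by
  rcases lt_trichotomy r 0 with h | h | h
  · have hs : 0 < s := by nlinarith
    constructor
    · exact div_pos_of_neg_of_neg h (by linarith)
    · have hne : r - s ≠ 0 := by intro h'; nlinarith
      have : rt r s - 1 = s / (r - s) := by unfold rt; field_simp; ring
      have h2 : s / (r - s) < 0 := div_neg_of_pos_of_neg hs (by linarith)
      linarith
  · exfalso; rw [h] at hm; nlinarith
  · have hs : s < 0 := by nlinarith
    constructor
    · exact div_pos h (by linarith)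
    · rw [rt, div_lt_one (by linarith : (0:ℝ) < r - s)]; linarith

lemma aff_rt {r s : ℝ} (h : r ≠ s) : aff r s (rt r s) = 0 := by
  unfold aff rt
  have : r - s ≠ 0 := sub_ne_zero.2 h
  field_simp
  ring

lemma aff_zero_iff {r s : ℝ} (h : r ≠ s) (t : ℝ) : aff r s t = 0 ↔ t = rt r s := by
  unfold aff rt
  rw [eq_div_iff (sub_ne_zero.2 h)]
  constructor <;> intro h' <;> nlinarith

lemma aff_pos_iff_lt {r s : ℝ} (hr : 0 < r) (hs : s < 0) (t : ℝ) :
    0 < aff r s t ↔ t < rt r s := by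
  unfold aff rt
  rw [lt_div_iff₀ (by linarith : (0:ℝ) < r - s)]
  constructor <;> intro <;> nlinarith

lemma aff_pos_iff_gt {r s : ℝ} (hr : r < 0) (hs : 0 < s) (t : ℝ) :
    0 < aff r s t ↔ rt r s < t := by
  unfold aff rt
  rw [div_lt_iff_of_neg (by linarith : r - s < 0)]
  constructor <;> intro <;> nlinarith

lemma aff_ne_zero {r s : ℝ} (hm : 0 < r * s) {t : ℝ} (ht : t ∈ Ioo (0:ℝ) 1) :
    aff r s t ≠ 0 := by
  rcases lt_trichotomy r 0 with h | h | h
  · have : s < 0 := by nlinarith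
    exact ne_of_lt (aff_neg h this ht.1.le ht.2.le)
  · exfalso; rw [h] at hm; nlinarith
  · have : 0 < s := by nlinarith
    exact (aff_pos h this ht.1.le ht.2.le).ne'

lemma aff_pos_iff_root {r s : ℝ} (hm : r * s < 0) (t : ℝ) (hne : t ≠ rt r s) :
    0 < aff r s t ↔ (0 < r ↔ t < rt r s) := by
  rcases lt_trichotomy r 0 with h | h | h
  · have hs : 0 < s := by nlinarith
    rw [aff_pos_iff_gt h hs]
    have h' : ¬(0 < r) := by linarith
    simp only [h', false_iff, iff_false]
    constructor
    · intro h1 h2; linarith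
    · intro h1; rcases lt_or_gt_of_ne hne with h2 | h2
      · exact absurd h2 h1
      · exact h2
  · exfalso; rw [h] at hm; nlinarith
  · have hs : s < 0 := by nlinarith
    rw [aff_pos_iff_lt h hs]
    simp only [h, true_iff, iff_true]

lemma parity2 (p q CA CB In0 In1 : Prop) (t1 t2 : ℝ) (h12 : t1 ≠ t2)
    (hCA : CA ↔ (q ↔ t1 < t2)) (hCB : CB ↔ (p ↔ t2 < t1))
    (hI0 : In0 ↔ (p ∧ q)) (hI1 : In1 ↔ (¬p ∧ ¬q)) :
    (cnt CA + cnt CB + cnt In0 + cnt In1) % 2 = 0 := by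
  unfold cnt
  rcases lt_or_gt_of_ne h12 with h | h <;>
    by_cases hp : p <;> by_cases hq : q <;>
      simp [hCA, hCB, hI0, hI1, hp, hq, h, lt_asymm h]

lemma parity3 (p q r CA CB CC In0 In1 : Prop) (t1 t2 t3 : ℝ)
    (h12 : t1 ≠ t2) (h13 : t1 ≠ t3) (h23 : t2 ≠ t3)
    (hCA : CA ↔ ((q ↔ t1 < t2) ∧ (r ↔ t1 < t3)))
    (hCB : CB ↔ ((r ↔ t2 < t3) ∧ (p ↔ t2 < t1)))
    (hCC : CC ↔ ((p ↔ t3 < t1) ∧ (q ↔ t3 < t2)))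
    (hI0 : In0 ↔ (p ∧ q ∧ r)) (hI1 : In1 ↔ (¬p ∧ ¬q ∧ ¬r)) :
    (cnt CA + cnt CB + cnt CC + cnt In0 + cnt In1) % 2 = 0 := by
  unfold cnt
  rcases lt_or_gt_of_ne h12 with h1 | h1 <;>
    rcases lt_or_gt_of_ne h13 with h2 | h2 <;>
      rcases lt_or_gt_of_ne h23 with h3 | h3 <;>
        first
          | linarith
          | (by_cases hp : p <;> by_cases hq : q <;> by_cases hr : r <;>
              simp [hCA, hCB, hCC, hI0, hI1, hp, hq, hr, h1, h2, h3,
                lt_asymm h1, lt_asymm h2, lt_asymm h3])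



end TwoTri
namespace TwoTri
open Set

section Kcases
variable (a₀ a₁ b₀ b₁ c₀ c₁ : ℝ) (CA CB CC In0 In1 : Prop)

/-- no mixed signs -/
lemma k0 (hfa : 0 < a₀ * a₁) (hfb : 0 < b₀ * b₁) (hfc : 0 < c₀ * c₁)
    (hCA : CA ↔ ∃ t ∈ Ioo (0:ℝ) 1, aff a₀ a₁ t = 0 ∧ 0 < aff b₀ b₁ t ∧ 0 < aff c₀ c₁ t)
    (hCB : CB ↔ ∃ t ∈ Ioo (0:ℝ) 1, aff b₀ b₁ t = 0 ∧ 0 < aff c₀ c₁ t ∧ 0 < aff a₀ a₁ t)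
    (hCC : CC ↔ ∃ t ∈ Ioo (0:ℝ) 1, aff c₀ c₁ t = 0 ∧ 0 < aff a₀ a₁ t ∧ 0 < aff b₀ b₁ t)
    (hI0 : In0 ↔ (0 < a₀ ∧ 0 < b₀ ∧ 0 < c₀)) (hI1 : In1 ↔ (0 < a₁ ∧ 0 < b₁ ∧ 0 < c₁)) :
    (cnt CA + cnt CB + cnt CC + cnt In0 + cnt In1) % 2 = 0 := by
  have hA : ¬CA := by rw [hCA]; rintro ⟨t, ht, h0, -⟩; exact aff_ne_zero hfa ht h0
  have hB : ¬CB := by rw [hCB]; rintro ⟨t, ht, h0, -⟩; exact aff_ne_zero hfb ht h0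
  have hC : ¬CC := by rw [hCC]; rintro ⟨t, ht, h0, -⟩; exact aff_ne_zero hfc ht h0
  have hiff : In0 ↔ In1 := by
    rw [hI0, hI1, pos_iff_of_mul_pos hfa, pos_iff_of_mul_pos hfb, pos_iff_of_mul_pos hfc]
  rw [cnt_false hA, cnt_false hB, cnt_false hC]
  by_cases h : In0
  · rw [cnt_true h, cnt_true (hiff.1 h)]
  · rw [cnt_false h, cnt_false (fun x => h (hiff.2 x))]

/-- exactly the first function mixed -/
lemma k1 (hma : a₀ * a₁ < 0) (hfb : 0 < b₀ * b₁) (hfc : 0 < c₀ * c₁)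
    (hCA : CA ↔ ∃ t ∈ Ioo (0:ℝ) 1, aff a₀ a₁ t = 0 ∧ 0 < aff b₀ b₁ t ∧ 0 < aff c₀ c₁ t)
    (hCB : CB ↔ ∃ t ∈ Ioo (0:ℝ) 1, aff b₀ b₁ t = 0 ∧ 0 < aff c₀ c₁ t ∧ 0 < aff a₀ a₁ t)
    (hCC : CC ↔ ∃ t ∈ Ioo (0:ℝ) 1, aff c₀ c₁ t = 0 ∧ 0 < aff a₀ a₁ t ∧ 0 < aff b₀ b₁ t)
    (hI0 : In0 ↔ (0 < a₀ ∧ 0 < b₀ ∧ 0 < c₀)) (hI1 : In1 ↔ (0 < a₁ ∧ 0 < b₁ ∧ 0 < c₁)) :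
    (cnt CA + cnt CB + cnt CC + cnt In0 + cnt In1) % 2 = 0 := by
  have hB : ¬CB := by rw [hCB]; rintro ⟨t, ht, h0, -⟩; exact aff_ne_zero hfb ht h0
  have hC : ¬CC := by rw [hCC]; rintro ⟨t, ht, h0, -⟩; exact aff_ne_zero hfc ht h0
  rw [cnt_false hB, cnt_false hC]
  rcases lt_trichotomy b₀ 0 with hb | hb | hb
  · -- b negative throughout: everything false
    have hb1 : b₁ < 0 := by nlinarith
    have hA : ¬CA := by
      rw [hCA]; rintro ⟨t, ht, -, hpos, -⟩
      exact absurd hpos (not_lt.2 (aff_neg hb hb1 ht.1.le ht.2.le).le)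
    have h0' : ¬In0 := by rw [hI0]; rintro ⟨-, h', -⟩; linarith
    have h1' : ¬In1 := by rw [hI1]; rintro ⟨-, h', -⟩; linarith
    rw [cnt_false hA, cnt_false h0', cnt_false h1']
  · exfalso; rw [hb] at hfb; nlinarith
  · have hb1 : 0 < b₁ := by nlinarith
    rcases lt_trichotomy c₀ 0 with hc | hc | hc
    · have hc1 : c₁ < 0 := by nlinarith
      have hA : ¬CA := by
        rw [hCA]; rintro ⟨t, ht, -, -, hpos⟩
        exact absurd hpos (not_lt.2 (aff_neg hc hc1 ht.1.le ht.2.le).le)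
      have h0' : ¬In0 := by rw [hI0]; rintro ⟨-, -, h'⟩; linarith
      have h1' : ¬In1 := by rw [hI1]; rintro ⟨-, -, h'⟩; linarith
      rw [cnt_false hA, cnt_false h0', cnt_false h1']
    · exfalso; rw [hc] at hfc; nlinarith
    · have hc1 : 0 < c₁ := by nlinarith
      have hA : CA := by
        rw [hCA]
        have hmem := rt_mem hma
        exact ⟨rt a₀ a₁, hmem, aff_rt (mixed_ne hma),
          aff_pos hb hb1 hmem.1.le hmem.2.le, aff_pos hc hc1 hmem.1.le hmem.2.le⟩
      rw [cnt_true hA]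
      rcases lt_trichotomy a₀ 0 with ha | ha | ha
      · have ha1 : 0 < a₁ := by nlinarith
        have h0' : ¬In0 := by rw [hI0]; rintro ⟨h', -, -⟩; linarith
        have h1' : In1 := by rw [hI1]; exact ⟨ha1, hb1, hc1⟩
        rw [cnt_false h0', cnt_true h1']
      · exfalso; rw [ha] at hma; nlinarith
      · have ha1 : a₁ < 0 := by nlinarith
        have h0' : In0 := by rw [hI0]; exact ⟨ha, hb, hc⟩
        have h1' : ¬In1 := by rw [hI1]; rintro ⟨h', -, -⟩; linarith
        rw [cnt_true h0', cnt_false h1']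

/-- exactly the first two functions mixed -/
lemma k2 (hma : a₀ * a₁ < 0) (hmb : b₀ * b₁ < 0) (hfc : 0 < c₀ * c₁)
    (hAB : ∀ t ∈ Ioo (0:ℝ) 1, ¬(aff a₀ a₁ t = 0 ∧ aff b₀ b₁ t = 0))
    (hCA : CA ↔ ∃ t ∈ Ioo (0:ℝ) 1, aff a₀ a₁ t = 0 ∧ 0 < aff b₀ b₁ t ∧ 0 < aff c₀ c₁ t)
    (hCB : CB ↔ ∃ t ∈ Ioo (0:ℝ) 1, aff b₀ b₁ t = 0 ∧ 0 < aff c₀ c₁ t ∧ 0 < aff a₀ a₁ t)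
    (hCC : CC ↔ ∃ t ∈ Ioo (0:ℝ) 1, aff c₀ c₁ t = 0 ∧ 0 < aff a₀ a₁ t ∧ 0 < aff b₀ b₁ t)
    (hI0 : In0 ↔ (0 < a₀ ∧ 0 < b₀ ∧ 0 < c₀)) (hI1 : In1 ↔ (0 < a₁ ∧ 0 < b₁ ∧ 0 < c₁)) :
    (cnt CA + cnt CB + cnt CC + cnt In0 + cnt In1) % 2 = 0 := by
  have hC : ¬CC := by rw [hCC]; rintro ⟨t, ht, h0, -⟩; exact aff_ne_zero hfc ht h0
  rcases lt_trichotomy c₀ 0 with hc | hc | hc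
  · have hc1 : c₁ < 0 := by nlinarith
    have hA : ¬CA := by
      rw [hCA]; rintro ⟨t, ht, -, -, hpos⟩
      exact absurd hpos (not_lt.2 (aff_neg hc hc1 ht.1.le ht.2.le).le)
    have hB : ¬CB := by
      rw [hCB]; rintro ⟨t, ht, -, hpos, -⟩
      exact absurd hpos (not_lt.2 (aff_neg hc hc1 ht.1.le ht.2.le).le)
    have h0' : ¬In0 := by rw [hI0]; rintro ⟨-, -, h'⟩; linarith
    have h1' : ¬In1 := by rw [hI1]; rintro ⟨-, -, h'⟩; linarith
    rw [cnt_false hA, cnt_false hB, cnt_false hC, cnt_false h0', cnt_false h1']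
  · exfalso; rw [hc] at hfc; nlinarith
  · have hc1 : 0 < c₁ := by nlinarith
    have hneA := mixed_ne hma
    have hneB := mixed_ne hmb
    have hmemA := rt_mem hma
    have hmemB := rt_mem hmb
    have htAB : rt a₀ a₁ ≠ rt b₀ b₁ := by
      intro h
      exact hAB (rt a₀ a₁) hmemA ⟨aff_rt hneA, h ▸ aff_rt hneB⟩
    have hCA' : CA ↔ (0 < b₀ ↔ rt a₀ a₁ < rt b₀ b₁) := by
      rw [hCA]
      constructor
      · rintro ⟨t, ht, h0, hb, -⟩
        rw [(aff_zero_iff hneA t).1 h0] at hb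
        exact (aff_pos_iff_root hmb _ htAB).1 hb
      · intro h
        exact ⟨rt a₀ a₁, hmemA, aff_rt hneA,
          (aff_pos_iff_root hmb _ htAB).2 h,
          aff_pos hc hc1 hmemA.1.le hmemA.2.le⟩
    have hCB' : CB ↔ (0 < a₀ ↔ rt b₀ b₁ < rt a₀ a₁) := by
      rw [hCB]
      constructor
      · rintro ⟨t, ht, h0, -, ha⟩
        rw [(aff_zero_iff hneB t).1 h0] at ha
        exact (aff_pos_iff_root hma _ (Ne.symm htAB)).1 ha
      · intro h
        exact ⟨rt b₀ b₁, hmemB, aff_rt hneB,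
          aff_pos hc hc1 hmemB.1.le hmemB.2.le,
          (aff_pos_iff_root hma _ (Ne.symm htAB)).2 h⟩
    have hI0' : In0 ↔ (0 < a₀ ∧ 0 < b₀) := by
      rw [hI0]; constructor
      · rintro ⟨h1, h2, -⟩; exact ⟨h1, h2⟩
      · rintro ⟨h1, h2⟩; exact ⟨h1, h2, hc⟩
    have hI1' : In1 ↔ (¬(0 < a₀) ∧ ¬(0 < b₀)) := by
      rw [hI1, ← mixed_iff hma, ← mixed_iff hmb]
      constructor
      · rintro ⟨h1, h2, -⟩; exact ⟨h1, h2⟩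
      · rintro ⟨h1, h2⟩; exact ⟨h1, h2, hc1⟩
    have := parity2 (0 < a₀) (0 < b₀) CA CB In0 In1 (rt a₀ a₁) (rt b₀ b₁) htAB
      hCA' hCB' hI0' hI1'
    rw [cnt_false hC]
    omega

/-- all three functions mixed -/
lemma k3 (hma : a₀ * a₁ < 0) (hmb : b₀ * b₁ < 0) (hmc : c₀ * c₁ < 0)
    (hAB : ∀ t ∈ Ioo (0:ℝ) 1, ¬(aff a₀ a₁ t = 0 ∧ aff b₀ b₁ t = 0))
    (hAC : ∀ t ∈ Ioo (0:ℝ) 1, ¬(aff a₀ a₁ t = 0 ∧ aff c₀ c₁ t = 0))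
    (hBC : ∀ t ∈ Ioo (0:ℝ) 1, ¬(aff b₀ b₁ t = 0 ∧ aff c₀ c₁ t = 0))
    (hCA : CA ↔ ∃ t ∈ Ioo (0:ℝ) 1, aff a₀ a₁ t = 0 ∧ 0 < aff b₀ b₁ t ∧ 0 < aff c₀ c₁ t)
    (hCB : CB ↔ ∃ t ∈ Ioo (0:ℝ) 1, aff b₀ b₁ t = 0 ∧ 0 < aff c₀ c₁ t ∧ 0 < aff a₀ a₁ t)
    (hCC : CC ↔ ∃ t ∈ Ioo (0:ℝ) 1, aff c₀ c₁ t = 0 ∧ 0 < aff a₀ a₁ t ∧ 0 < aff b₀ b₁ t)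
    (hI0 : In0 ↔ (0 < a₀ ∧ 0 < b₀ ∧ 0 < c₀)) (hI1 : In1 ↔ (0 < a₁ ∧ 0 < b₁ ∧ 0 < c₁)) :
    (cnt CA + cnt CB + cnt CC + cnt In0 + cnt In1) % 2 = 0 := by
  have hneA := mixed_ne hma
  have hneB := mixed_ne hmb
  have hneC := mixed_ne hmc
  have hmemA := rt_mem hma
  have hmemB := rt_mem hmb
  have hmemC := rt_mem hmc
  have htAB : rt a₀ a₁ ≠ rt b₀ b₁ := fun h =>
    hAB (rt a₀ a₁) hmemA ⟨aff_rt hneA, h ▸ aff_rt hneB⟩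
  have htAC : rt a₀ a₁ ≠ rt c₀ c₁ := fun h =>
    hAC (rt a₀ a₁) hmemA ⟨aff_rt hneA, h ▸ aff_rt hneC⟩
  have htBC : rt b₀ b₁ ≠ rt c₀ c₁ := fun h =>
    hBC (rt b₀ b₁) hmemB ⟨aff_rt hneB, h ▸ aff_rt hneC⟩
  have hCA' : CA ↔ ((0 < b₀ ↔ rt a₀ a₁ < rt b₀ b₁) ∧ (0 < c₀ ↔ rt a₀ a₁ < rt c₀ c₁)) := by
    rw [hCA]
    constructor
    · rintro ⟨t, ht, h0, hb, hc⟩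
      rw [(aff_zero_iff hneA t).1 h0] at hb hc
      exact ⟨(aff_pos_iff_root hmb _ htAB).1 hb, (aff_pos_iff_root hmc _ htAC).1 hc⟩
    · rintro ⟨h1, h2⟩
      exact ⟨rt a₀ a₁, hmemA, aff_rt hneA,
        (aff_pos_iff_root hmb _ htAB).2 h1, (aff_pos_iff_root hmc _ htAC).2 h2⟩
  have hCB' : CB ↔ ((0 < c₀ ↔ rt b₀ b₁ < rt c₀ c₁) ∧ (0 < a₀ ↔ rt b₀ b₁ < rt a₀ a₁)) := by
    rw [hCB]
    constructor
    · rintro ⟨t, ht, h0, hc, ha⟩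
      rw [(aff_zero_iff hneB t).1 h0] at hc ha
      exact ⟨(aff_pos_iff_root hmc _ htBC).1 hc, (aff_pos_iff_root hma _ htAB.symm).1 ha⟩
    · rintro ⟨h1, h2⟩
      exact ⟨rt b₀ b₁, hmemB, aff_rt hneB,
        (aff_pos_iff_root hmc _ htBC).2 h1, (aff_pos_iff_root hma _ htAB.symm).2 h2⟩
  have hCC' : CC ↔ ((0 < a₀ ↔ rt c₀ c₁ < rt a₀ a₁) ∧ (0 < b₀ ↔ rt c₀ c₁ < rt b₀ b₁)) := by
    rw [hCC]
    constructor
    · rintro ⟨t, ht, h0, ha, hb⟩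
      rw [(aff_zero_iff hneC t).1 h0] at ha hb
      exact ⟨(aff_pos_iff_root hma _ htAC.symm).1 ha, (aff_pos_iff_root hmb _ htBC.symm).1 hb⟩
    · rintro ⟨h1, h2⟩
      exact ⟨rt c₀ c₁, hmemC, aff_rt hneC,
        (aff_pos_iff_root hma _ htAC.symm).2 h1, (aff_pos_iff_root hmb _ htBC.symm).2 h2⟩
  have hI1' : In1 ↔ (¬(0 < a₀) ∧ ¬(0 < b₀) ∧ ¬(0 < c₀)) := by
    rw [hI1, ← mixed_iff hma, ← mixed_iff hmb, ← mixed_iff hmc]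
  exact parity3 (0 < a₀) (0 < b₀) (0 < c₀) CA CB CC In0 In1
    (rt a₀ a₁) (rt b₀ b₁) (rt c₀ c₁) htAB htAC htBC hCA' hCB' hCC' hI0 hI1'

set_option maxHeartbeats 1000000 in
/-- master abstract parity lemma -/
lemma triple (ha₀ : a₀ ≠ 0) (ha₁ : a₁ ≠ 0) (hb₀ : b₀ ≠ 0) (hb₁ : b₁ ≠ 0)
    (hc₀ : c₀ ≠ 0) (hc₁ : c₁ ≠ 0)
    (hAB : ∀ t ∈ Ioo (0:ℝ) 1, ¬(aff a₀ a₁ t = 0 ∧ aff b₀ b₁ t = 0))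
    (hAC : ∀ t ∈ Ioo (0:ℝ) 1, ¬(aff a₀ a₁ t = 0 ∧ aff c₀ c₁ t = 0))
    (hBC : ∀ t ∈ Ioo (0:ℝ) 1, ¬(aff b₀ b₁ t = 0 ∧ aff c₀ c₁ t = 0))
    (hCA : CA ↔ ∃ t ∈ Ioo (0:ℝ) 1, aff a₀ a₁ t = 0 ∧ 0 < aff b₀ b₁ t ∧ 0 < aff c₀ c₁ t)
    (hCB : CB ↔ ∃ t ∈ Ioo (0:ℝ) 1, aff b₀ b₁ t = 0 ∧ 0 < aff c₀ c₁ t ∧ 0 < aff a₀ a₁ t)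
    (hCC : CC ↔ ∃ t ∈ Ioo (0:ℝ) 1, aff c₀ c₁ t = 0 ∧ 0 < aff a₀ a₁ t ∧ 0 < aff b₀ b₁ t)
    (hI0 : In0 ↔ (0 < a₀ ∧ 0 < b₀ ∧ 0 < c₀)) (hI1 : In1 ↔ (0 < a₁ ∧ 0 < b₁ ∧ 0 < c₁)) :
    (cnt CA + cnt CB + cnt CC + cnt In0 + cnt In1) % 2 = 0 := by
  have hBA : ∀ t ∈ Ioo (0:ℝ) 1, ¬(aff b₀ b₁ t = 0 ∧ aff a₀ a₁ t = 0) :=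
    fun t ht h => hAB t ht ⟨h.2, h.1⟩
  have hCA2 : ∀ t ∈ Ioo (0:ℝ) 1, ¬(aff c₀ c₁ t = 0 ∧ aff a₀ a₁ t = 0) :=
    fun t ht h => hAC t ht ⟨h.2, h.1⟩
  have hCB2 : ∀ t ∈ Ioo (0:ℝ) 1, ¬(aff c₀ c₁ t = 0 ∧ aff b₀ b₁ t = 0) :=
    fun t ht h => hBC t ht ⟨h.2, h.1⟩
  have hI0b : In0 ↔ (0 < b₀ ∧ 0 < c₀ ∧ 0 < a₀) := by
    rw [hI0]; exact ⟨fun ⟨x, y, z⟩ => ⟨y, z, x⟩, fun ⟨y, z, x⟩ => ⟨x, y, z⟩⟩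
  have hI1b : In1 ↔ (0 < b₁ ∧ 0 < c₁ ∧ 0 < a₁) := by
    rw [hI1]; exact ⟨fun ⟨x, y, z⟩ => ⟨y, z, x⟩, fun ⟨y, z, x⟩ => ⟨x, y, z⟩⟩
  have hI0c : In0 ↔ (0 < c₀ ∧ 0 < a₀ ∧ 0 < b₀) := by
    rw [hI0]; exact ⟨fun ⟨x, y, z⟩ => ⟨z, x, y⟩, fun ⟨z, x, y⟩ => ⟨x, y, z⟩⟩
  have hI1c : In1 ↔ (0 < c₁ ∧ 0 < a₁ ∧ 0 < b₁) := by
    rw [hI1]; exact ⟨fun ⟨x, y, z⟩ => ⟨z, x, y⟩, fun ⟨z, x, y⟩ => ⟨x, y, z⟩⟩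
  rcases lt_trichotomy (a₀ * a₁) 0 with ha | ha | ha
  · rcases lt_trichotomy (b₀ * b₁) 0 with hb | hb | hb
    · rcases lt_trichotomy (c₀ * c₁) 0 with hc | hc | hc
      · exact k3 _ _ _ _ _ _ _ _ _ _ _ ha hb hc hAB hAC hBC hCA hCB hCC hI0 hI1
      · exact absurd hc (mul_ne_zero hc₀ hc₁)
      · exact k2 _ _ _ _ _ _ _ _ _ _ _ ha hb hc hAB hCA hCB hCC hI0 hI1
    · exact absurd hb (mul_ne_zero hb₀ hb₁)
    · rcases lt_trichotomy (c₀ * c₁) 0 with hc | hc | hc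
      · have h := k2 c₀ c₁ a₀ a₁ b₀ b₁ CC CA CB In0 In1 hc ha hb hCA2 hCC hCA hCB hI0c hI1c
        omega
      · exact absurd hc (mul_ne_zero hc₀ hc₁)
      · exact k1 _ _ _ _ _ _ _ _ _ _ _ ha hb hc hCA hCB hCC hI0 hI1
  · exact absurd ha (mul_ne_zero ha₀ ha₁)
  · rcases lt_trichotomy (b₀ * b₁) 0 with hb | hb | hb
    · rcases lt_trichotomy (c₀ * c₁) 0 with hc | hc | hc
      · have h := k2 b₀ b₁ c₀ c₁ a₀ a₁ CB CC CA In0 In1 hb hc ha hBC hCB hCC hCA hI0b hI1b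
        omega
      · exact absurd hc (mul_ne_zero hc₀ hc₁)
      · have h := k1 b₀ b₁ c₀ c₁ a₀ a₁ CB CC CA In0 In1 hb hc ha hCB hCC hCA hI0b hI1b
        omega
    · exact absurd hb (mul_ne_zero hb₀ hb₁)
    · rcases lt_trichotomy (c₀ * c₁) 0 with hc | hc | hc
      · have h := k1 c₀ c₁ a₀ a₁ b₀ b₁ CC CA CB In0 In1 hc ha hb hCC hCA hCB hI0c hI1c
        omega
      · exact absurd hc (mul_ne_zero hc₀ hc₁)
      · exact k0 _ _ _ _ _ _ _ _ _ _ _ ha hb hc hCA hCB hCC hI0 hI1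

end Kcases
end TwoTri
namespace TwoTri
open Set

lemma dt_cycle (a b c : ℝ × ℝ) : dt a b c = dt b c a := by unfold dt; ring

/-- strict interior of the triangle `a b c`, by determinant signs. -/
def inswt (a b c z : ℝ × ℝ) : Prop :=
  0 < dt a b c * dt a b z ∧ 0 < dt a b c * dt b c z ∧ 0 < dt a b c * dt c a z

lemma two_lines {a b c z : ℝ × ℝ} (hw : dt a b c ≠ 0)
    (h1 : dt a b z = 0) (h2 : dt b c z = 0) : z = b := by
  have hab : a ≠ b := by
    rintro rfl
    exact hw (by unfold dt; ring)
  obtain ⟨s, rfl⟩ := exists_param h1 hab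
  rw [dt_affine, dt_self_left] at h2
  have hwa : dt b c a ≠ 0 := by rwa [← dt_cycle]
  have h2' : (1 - s) * dt b c a = 0 := by linarith
  have hs : s = 1 := by
    rcases mul_eq_zero.1 h2' with h' | h'
    · linarith
    · exact absurd h' hwa
  rw [hs]
  norm_num

lemma seg_inter_subsingleton {x y a b : ℝ × ℝ}
    (hax : dt a b x ≠ 0) (hay : dt a b y ≠ 0) :
    (openSegment ℝ x y ∩ openSegment ℝ a b).Subsingleton := by
  rintro z ⟨hz1, hz2⟩ z' ⟨hz1', hz2'⟩
  obtain ⟨t, ht, rfl⟩ := mem_openSegment''.1 hz1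
  obtain ⟨t', ht', rfl⟩ := mem_openSegment''.1 hz1'
  have hzero : ∀ u : ℝ × ℝ, u ∈ openSegment ℝ a b → dt a b u = 0 := by
    intro u hu
    obtain ⟨s, hs, rfl⟩ := mem_openSegment''.1 hu
    rw [dt_affine, dt_self_left, dt_self_right]; ring
  have e1 : aff (dt a b x) (dt a b y) t = 0 := by
    rw [aff, ← dt_affine]; exact hzero _ hz2
  have e2 : aff (dt a b x) (dt a b y) t' = 0 := by
    rw [aff, ← dt_affine]; exact hzero _ hz2'
  have hne : dt a b x ≠ dt a b y := by
    intro h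
    rw [aff, h] at e1
    apply hay
    nlinarith [e1]
  rw [aff_zero_iff hne] at e1 e2
  rw [e1, e2]

lemma seg_adjacent_disjoint (a b c : ℝ × ℝ) (h : dt b c a ≠ 0) :
    openSegment ℝ a b ∩ openSegment ℝ b c = ∅ := by
  ext z
  simp only [mem_inter_iff, mem_empty_iff_false, iff_false, not_and]
  intro h1 h2
  obtain ⟨t, ht, rfl⟩ := mem_openSegment''.1 h1
  have hz : dt b c ((1 - t) • a + t • b) = 0 := by
    obtain ⟨s, hs, he⟩ := mem_openSegment''.1 h2
    rw [he, dt_affine, dt_self_left, dt_self_right]; ring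
  rw [dt_affine, dt_self_left] at hz
  have : (1 - t) * dt b c a = 0 := by linarith
  rcases mul_eq_zero.1 this with h' | h'
  · linarith [ht.2]
  · exact h h'

lemma cnt_of_subsingleton {s : Set (ℝ × ℝ)} (h : s.Subsingleton) :
    s.ncard = cnt s.Nonempty := by
  rcases s.eq_empty_or_nonempty with rfl | hne
  · simp [cnt]
  · obtain ⟨z, hz⟩ := hne
    rw [cnt_true ⟨z, hz⟩, h.eq_singleton_of_mem hz]
    exact Set.ncard_singleton z

/-- Parity of crossings of segment `x y` with the triangle `a b c`. -/
lemma edge_parity (a b c x y : ℝ × ℝ)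
    (hw : dt a b c ≠ 0)
    (hax : dt a b x ≠ 0) (hay : dt a b y ≠ 0)
    (hbx : dt b c x ≠ 0) (hby : dt b c y ≠ 0)
    (hcx : dt c a x ≠ 0) (hcy : dt c a y ≠ 0)
    (hxa : dt x y a ≠ 0) (hxb : dt x y b ≠ 0) (hxc : dt x y c ≠ 0) :
    (cnt (openSegment ℝ x y ∩ openSegment ℝ a b).Nonempty +
     cnt (openSegment ℝ x y ∩ openSegment ℝ b c).Nonempty +
     cnt (openSegment ℝ x y ∩ openSegment ℝ c a).Nonempty +
     cnt (inswt a b c x) + cnt (inswt a b c y)) % 2 = 0 := by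
  have hw2 : dt b c a = dt a b c := (dt_cycle a b c).symm
  have hw3 : dt c a b = dt a b c := by rw [dt_cycle c a b]
  -- affine evaluation along the segment
  have hA : ∀ t : ℝ, dt a b c * dt a b ((1 - t) • x + t • y) = aff (dt a b c * dt a b x) (dt a b c * dt a b y) t := by
    intro t; rw [dt_affine, aff]; ring
  have hB : ∀ t : ℝ, dt a b c * dt b c ((1 - t) • x + t • y) = aff (dt a b c * dt b c x) (dt a b c * dt b c y) t := by
    intro t; rw [dt_affine, aff]; ring
  have hC : ∀ t : ℝ, dt a b c * dt c a ((1 - t) • x + t • y) = aff (dt a b c * dt c a x) (dt a b c * dt c a y) t := by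
    intro t; rw [dt_affine, aff]; ring
  have hγ : ∀ t : ℝ, dt x y ((1 - t) • x + t • y) = 0 := by
    intro t; rw [dt_affine, dt_self_left, dt_self_right]; ring
  have hwzero : ∀ u : ℝ, dt a b c * u = 0 ↔ u = 0 := by
    intro u; constructor
    · intro h; rcases mul_eq_zero.1 h with h | h; exact absurd h hw; exact h
    · intro h; rw [h, mul_zero]
  -- membership characterizations
  have memab : ∀ t : ℝ, ((1 - t) • x + t • y ∈ openSegment ℝ a b ↔
      (aff (dt a b c * dt a b x) (dt a b c * dt a b y) t = 0 ∧ 0 < aff (dt a b c * dt b c x) (dt a b c * dt b c y) t ∧ 0 < aff (dt a b c * dt c a x) (dt a b c * dt c a y) t)) := by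
    intro t
    rw [mem_openSegment_iff_dt (show dt b c a ≠ 0 by rw [hw2]; exact hw)
      (show dt c a b ≠ 0 by rw [hw3]; exact hw), hw2, hw3]
    rw [hB, hC, ← hwzero (dt a b ((1 - t) • x + t • y)), hA]
  have membc : ∀ t : ℝ, ((1 - t) • x + t • y ∈ openSegment ℝ b c ↔
      (aff (dt a b c * dt b c x) (dt a b c * dt b c y) t = 0 ∧ 0 < aff (dt a b c * dt c a x) (dt a b c * dt c a y) t ∧ 0 < aff (dt a b c * dt a b x) (dt a b c * dt a b y) t)) := by
    intro t
    rw [mem_openSegment_iff_dt (show dt c a b ≠ 0 by rw [hw3]; exact hw) hw, hw3]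
    rw [hC, hA, ← hwzero (dt b c ((1 - t) • x + t • y)), hB]
  have memca : ∀ t : ℝ, ((1 - t) • x + t • y ∈ openSegment ℝ c a ↔
      (aff (dt a b c * dt c a x) (dt a b c * dt c a y) t = 0 ∧ 0 < aff (dt a b c * dt a b x) (dt a b c * dt a b y) t ∧ 0 < aff (dt a b c * dt b c x) (dt a b c * dt b c y) t)) := by
    intro t
    rw [mem_openSegment_iff_dt hw (show dt b c a ≠ 0 by rw [hw2]; exact hw), hw2]
    rw [hA, hB, ← hwzero (dt c a ((1 - t) • x + t • y)), hC]
  have hCAiff : (openSegment ℝ x y ∩ openSegment ℝ a b).Nonempty ↔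
      ∃ t ∈ Ioo (0:ℝ) 1, aff (dt a b c * dt a b x) (dt a b c * dt a b y) t = 0 ∧ 0 < aff (dt a b c * dt b c x) (dt a b c * dt b c y) t ∧ 0 < aff (dt a b c * dt c a x) (dt a b c * dt c a y) t := by
    constructor
    · rintro ⟨z, hz1, hz2⟩
      obtain ⟨t, ht, rfl⟩ := mem_openSegment''.1 hz1
      exact ⟨t, ht, (memab t).1 hz2⟩
    · rintro ⟨t, ht, hprop⟩
      exact ⟨(1 - t) • x + t • y, mem_openSegment''.2 ⟨t, ht, rfl⟩, (memab t).2 hprop⟩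
  have hCBiff : (openSegment ℝ x y ∩ openSegment ℝ b c).Nonempty ↔
      ∃ t ∈ Ioo (0:ℝ) 1, aff (dt a b c * dt b c x) (dt a b c * dt b c y) t = 0 ∧ 0 < aff (dt a b c * dt c a x) (dt a b c * dt c a y) t ∧ 0 < aff (dt a b c * dt a b x) (dt a b c * dt a b y) t := by
    constructor
    · rintro ⟨z, hz1, hz2⟩
      obtain ⟨t, ht, rfl⟩ := mem_openSegment''.1 hz1
      exact ⟨t, ht, (membc t).1 hz2⟩
    · rintro ⟨t, ht, hprop⟩
      exact ⟨(1 - t) • x + t • y, mem_openSegment''.2 ⟨t, ht, rfl⟩, (membc t).2 hprop⟩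
  have hCCiff : (openSegment ℝ x y ∩ openSegment ℝ c a).Nonempty ↔
      ∃ t ∈ Ioo (0:ℝ) 1, aff (dt a b c * dt c a x) (dt a b c * dt c a y) t = 0 ∧ 0 < aff (dt a b c * dt a b x) (dt a b c * dt a b y) t ∧ 0 < aff (dt a b c * dt b c x) (dt a b c * dt b c y) t := by
    constructor
    · rintro ⟨z, hz1, hz2⟩
      obtain ⟨t, ht, rfl⟩ := mem_openSegment''.1 hz1
      exact ⟨t, ht, (memca t).1 hz2⟩
    · rintro ⟨t, ht, hprop⟩
      exact ⟨(1 - t) • x + t • y, mem_openSegment''.2 ⟨t, ht, rfl⟩, (memca t).2 hprop⟩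
  -- separation
  have hsepAB : ∀ t ∈ Ioo (0:ℝ) 1, ¬(aff (dt a b c * dt a b x) (dt a b c * dt a b y) t = 0 ∧ aff (dt a b c * dt b c x) (dt a b c * dt b c y) t = 0) := by
    rintro t ht ⟨h1, h2⟩
    rw [← hA, hwzero] at h1
    rw [← hB, hwzero] at h2
    have := two_lines hw h1 h2
    exact hxb (this ▸ hγ t)
  have hsepAC : ∀ t ∈ Ioo (0:ℝ) 1, ¬(aff (dt a b c * dt a b x) (dt a b c * dt a b y) t = 0 ∧ aff (dt a b c * dt c a x) (dt a b c * dt c a y) t = 0) := by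
    rintro t ht ⟨h1, h2⟩
    rw [← hA, hwzero] at h1
    rw [← hC, hwzero] at h2
    have := two_lines (show dt c a b ≠ 0 by rw [hw3]; exact hw) h2 h1
    exact hxa (this ▸ hγ t)
  have hsepBC : ∀ t ∈ Ioo (0:ℝ) 1, ¬(aff (dt a b c * dt b c x) (dt a b c * dt b c y) t = 0 ∧ aff (dt a b c * dt c a x) (dt a b c * dt c a y) t = 0) := by
    rintro t ht ⟨h1, h2⟩
    rw [← hB, hwzero] at h1
    rw [← hC, hwzero] at h2
    have := two_lines (show dt b c a ≠ 0 by rw [hw2]; exact hw) h1 h2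
    exact hxc (this ▸ hγ t)
  have hI0 : inswt a b c x ↔ (0 < (dt a b c * dt a b x) ∧ 0 < (dt a b c * dt b c x) ∧ 0 < (dt a b c * dt c a x)) := Iff.rfl
  have hI1 : inswt a b c y ↔ (0 < (dt a b c * dt a b y) ∧ 0 < (dt a b c * dt b c y) ∧ 0 < (dt a b c * dt c a y)) := Iff.rfl
  exact triple (dt a b c * dt a b x) (dt a b c * dt a b y) (dt a b c * dt b c x) (dt a b c * dt b c y) (dt a b c * dt c a x) (dt a b c * dt c a y)
    (openSegment ℝ x y ∩ openSegment ℝ a b).Nonempty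
    (openSegment ℝ x y ∩ openSegment ℝ b c).Nonempty
    (openSegment ℝ x y ∩ openSegment ℝ c a).Nonempty
    (inswt a b c x) (inswt a b c y)
    (mul_ne_zero hw hax) (mul_ne_zero hw hay) (mul_ne_zero hw hbx)
    (mul_ne_zero hw hby) (mul_ne_zero hw hcx) (mul_ne_zero hw hcy)
    hsepAB hsepAC hsepBC hCAiff hCBiff hCCiff hI0 hI1

lemma disjT {s s' e e' : Set (ℝ × ℝ)} (h : e ∩ e' = ∅) :
    Disjoint (s ∩ e) (s' ∩ e') :=
  Set.disjoint_left.2 fun {z} h1 h2 => by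
    have : z ∈ e ∩ e' := ⟨h1.2, h2.2⟩
    rw [h] at this
    exact this

lemma disjS {s s' e e' : Set (ℝ × ℝ)} (h : s ∩ s' = ∅) :
    Disjoint (s ∩ e) (s' ∩ e') :=
  Set.disjoint_left.2 fun {z} h1 h2 => by
    have : z ∈ s ∩ s' := ⟨h1.1, h2.1⟩
    rw [h] at this
    exact this

end TwoTri

open TwoTri Set

/-- Two triangles in general position (six pairwise distinct points,
no three collinear) have an even number of points where an open edge segment of one
meets an open edge segment of the other. -/
theorem two_triangles_cross_evenly (p₁ p₂ p₃ q₁ q₂ q₃ : ℝ × ℝ)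
    (hdist : List.Pairwise (· ≠ ·) [p₁, p₂, p₃, q₁, q₂, q₃])
    (hcol : ∀ x ∈ ({p₁, p₂, p₃, q₁, q₂, q₃} : Set (ℝ × ℝ)),
      ∀ y ∈ ({p₁, p₂, p₃, q₁, q₂, q₃} : Set (ℝ × ℝ)),
      ∀ z ∈ ({p₁, p₂, p₃, q₁, q₂, q₃} : Set (ℝ × ℝ)),
      x ≠ y → x ≠ z → y ≠ z → ¬ Collinear ℝ ({x, y, z} : Set (ℝ × ℝ))) :
    ((openSegment ℝ p₁ p₂ ∪ openSegment ℝ p₂ p₃ ∪ openSegment ℝ p₃ p₁) ∩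
      (openSegment ℝ q₁ q₂ ∪ openSegment ℝ q₂ q₃ ∪ openSegment ℝ q₃ q₁)).Finite ∧
    Even (((openSegment ℝ p₁ p₂ ∪ openSegment ℝ p₂ p₃ ∪ openSegment ℝ p₃ p₁) ∩
      (openSegment ℝ q₁ q₂ ∪ openSegment ℝ q₂ q₃ ∪ openSegment ℝ q₃ q₁)).ncard) := by

  obtain ⟨hd0, hdist⟩ := List.pairwise_cons.1 hdist
  obtain ⟨hd1, hdist⟩ := List.pairwise_cons.1 hdist
  obtain ⟨hd2, hdist⟩ := List.pairwise_cons.1 hdist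
  obtain ⟨hd3, hdist⟩ := List.pairwise_cons.1 hdist
  obtain ⟨hd4, hdist⟩ := List.pairwise_cons.1 hdist
  have ne01 : p₁ ≠ p₂ := hd0 p₂ (by simp)
  have ne02 : p₁ ≠ p₃ := hd0 p₃ (by simp)
  have ne03 : p₁ ≠ q₁ := hd0 q₁ (by simp)
  have ne04 : p₁ ≠ q₂ := hd0 q₂ (by simp)
  have ne05 : p₁ ≠ q₃ := hd0 q₃ (by simp)
  have ne12 : p₂ ≠ p₃ := hd1 p₃ (by simp)
  have ne13 : p₂ ≠ q₁ := hd1 q₁ (by simp)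
  have ne14 : p₂ ≠ q₂ := hd1 q₂ (by simp)
  have ne15 : p₂ ≠ q₃ := hd1 q₃ (by simp)
  have ne23 : p₃ ≠ q₁ := hd2 q₁ (by simp)
  have ne24 : p₃ ≠ q₂ := hd2 q₂ (by simp)
  have ne25 : p₃ ≠ q₃ := hd2 q₃ (by simp)
  have ne34 : q₁ ≠ q₂ := hd3 q₂ (by simp)
  have ne35 : q₁ ≠ q₃ := hd3 q₃ (by simp)
  have ne45 : q₂ ≠ q₃ := hd4 q₃ (by simp)
  have nc : ∀ u v z : ℝ × ℝ, u ∈ ({p₁, p₂, p₃, q₁, q₂, q₃} : Set (ℝ × ℝ)) →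
      v ∈ ({p₁, p₂, p₃, q₁, q₂, q₃} : Set (ℝ × ℝ)) →
      z ∈ ({p₁, p₂, p₃, q₁, q₂, q₃} : Set (ℝ × ℝ)) →
      u ≠ v → u ≠ z → v ≠ z → dt u v z ≠ 0 :=
    fun u v z hu hv hz h1 h2 h3 h0 =>
      hcol u hu v hv z hz h1 h2 h3 (collinear_of_dt_eq_zero h0)
  have ndt0 : dt p₁ p₂ p₃ ≠ 0 := nc p₁ p₂ p₃ (by simp) (by simp) (by simp) ne01 ne02 ne12
  have ndt1 : dt q₁ q₂ q₃ ≠ 0 := nc q₁ q₂ q₃ (by simp) (by simp) (by simp) ne34 ne35 ne45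
  have wP2 : dt p₂ p₃ p₁ ≠ 0 := by rw [← dt_cycle]; exact ndt0
  have wP3 : dt p₃ p₁ p₂ ≠ 0 := by rw [dt_cycle]; exact ndt0
  have wQ2 : dt q₂ q₃ q₁ ≠ 0 := by rw [← dt_cycle]; exact ndt1
  have wQ3 : dt q₃ q₁ q₂ ≠ 0 := by rw [dt_cycle]; exact ndt1
  have ndt2 : dt p₁ p₂ q₁ ≠ 0 := nc p₁ p₂ q₁ (by simp) (by simp) (by simp) ne01 ne03 ne13
  have ndt3 : dt p₁ p₂ q₂ ≠ 0 := nc p₁ p₂ q₂ (by simp) (by simp) (by simp) ne01 ne04 ne14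
  have ndt4 : dt p₁ p₂ q₃ ≠ 0 := nc p₁ p₂ q₃ (by simp) (by simp) (by simp) ne01 ne05 ne15
  have ndt5 : dt p₂ p₃ q₁ ≠ 0 := nc p₂ p₃ q₁ (by simp) (by simp) (by simp) ne12 ne13 ne23
  have ndt6 : dt p₂ p₃ q₂ ≠ 0 := nc p₂ p₃ q₂ (by simp) (by simp) (by simp) ne12 ne14 ne24
  have ndt7 : dt p₂ p₃ q₃ ≠ 0 := nc p₂ p₃ q₃ (by simp) (by simp) (by simp) ne12 ne15 ne25
  have ndt8 : dt p₃ p₁ q₁ ≠ 0 := nc p₃ p₁ q₁ (by simp) (by simp) (by simp) ne02.symm ne23 ne03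
  have ndt9 : dt p₃ p₁ q₂ ≠ 0 := nc p₃ p₁ q₂ (by simp) (by simp) (by simp) ne02.symm ne24 ne04
  have ndt10 : dt p₃ p₁ q₃ ≠ 0 := nc p₃ p₁ q₃ (by simp) (by simp) (by simp) ne02.symm ne25 ne05
  have ndt11 : dt q₁ q₂ p₁ ≠ 0 := nc q₁ q₂ p₁ (by simp) (by simp) (by simp) ne34 ne03.symm ne04.symm
  have ndt12 : dt q₁ q₂ p₂ ≠ 0 := nc q₁ q₂ p₂ (by simp) (by simp) (by simp) ne34 ne13.symm ne14.symm
  have ndt13 : dt q₁ q₂ p₃ ≠ 0 := nc q₁ q₂ p₃ (by simp) (by simp) (by simp) ne34 ne23.symm ne24.symm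
  have ndt14 : dt q₂ q₃ p₁ ≠ 0 := nc q₂ q₃ p₁ (by simp) (by simp) (by simp) ne45 ne04.symm ne05.symm
  have ndt15 : dt q₂ q₃ p₂ ≠ 0 := nc q₂ q₃ p₂ (by simp) (by simp) (by simp) ne45 ne14.symm ne15.symm
  have ndt16 : dt q₂ q₃ p₃ ≠ 0 := nc q₂ q₃ p₃ (by simp) (by simp) (by simp) ne45 ne24.symm ne25.symm
  have ndt17 : dt q₃ q₁ p₁ ≠ 0 := nc q₃ q₁ p₁ (by simp) (by simp) (by simp) ne35.symm ne05.symm ne03.symm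
  have ndt18 : dt q₃ q₁ p₂ ≠ 0 := nc q₃ q₁ p₂ (by simp) (by simp) (by simp) ne35.symm ne15.symm ne13.symm
  have ndt19 : dt q₃ q₁ p₃ ≠ 0 := nc q₃ q₁ p₃ (by simp) (by simp) (by simp) ne35.symm ne25.symm ne23.symm
  have H1 := edge_parity p₁ p₂ p₃ q₁ q₂ ndt0 ndt2 ndt3 ndt5 ndt6 ndt8 ndt9 ndt11 ndt12 ndt13
  have H2 := edge_parity p₁ p₂ p₃ q₂ q₃ ndt0 ndt3 ndt4 ndt6 ndt7 ndt9 ndt10 ndt14 ndt15 ndt16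
  have H3 := edge_parity p₁ p₂ p₃ q₃ q₁ ndt0 ndt4 ndt2 ndt7 ndt5 ndt10 ndt8 ndt17 ndt18 ndt19
  have sub00 : (openSegment ℝ q₁ q₂ ∩ openSegment ℝ p₁ p₂).Subsingleton := seg_inter_subsingleton ndt2 ndt3
  have fin00 : (openSegment ℝ q₁ q₂ ∩ openSegment ℝ p₁ p₂).Finite := sub00.finite
  have sub01 : (openSegment ℝ q₁ q₂ ∩ openSegment ℝ p₂ p₃).Subsingleton := seg_inter_subsingleton ndt5 ndt6
  have fin01 : (openSegment ℝ q₁ q₂ ∩ openSegment ℝ p₂ p₃).Finite := sub01.finite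
  have sub02 : (openSegment ℝ q₁ q₂ ∩ openSegment ℝ p₃ p₁).Subsingleton := seg_inter_subsingleton ndt8 ndt9
  have fin02 : (openSegment ℝ q₁ q₂ ∩ openSegment ℝ p₃ p₁).Finite := sub02.finite
  have sub10 : (openSegment ℝ q₂ q₃ ∩ openSegment ℝ p₁ p₂).Subsingleton := seg_inter_subsingleton ndt3 ndt4
  have fin10 : (openSegment ℝ q₂ q₃ ∩ openSegment ℝ p₁ p₂).Finite := sub10.finite
  have sub11 : (openSegment ℝ q₂ q₃ ∩ openSegment ℝ p₂ p₃).Subsingleton := seg_inter_subsingleton ndt6 ndt7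
  have fin11 : (openSegment ℝ q₂ q₃ ∩ openSegment ℝ p₂ p₃).Finite := sub11.finite
  have sub12 : (openSegment ℝ q₂ q₃ ∩ openSegment ℝ p₃ p₁).Subsingleton := seg_inter_subsingleton ndt9 ndt10
  have fin12 : (openSegment ℝ q₂ q₃ ∩ openSegment ℝ p₃ p₁).Finite := sub12.finite
  have sub20 : (openSegment ℝ q₃ q₁ ∩ openSegment ℝ p₁ p₂).Subsingleton := seg_inter_subsingleton ndt4 ndt2
  have fin20 : (openSegment ℝ q₃ q₁ ∩ openSegment ℝ p₁ p₂).Finite := sub20.finite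
  have sub21 : (openSegment ℝ q₃ q₁ ∩ openSegment ℝ p₂ p₃).Subsingleton := seg_inter_subsingleton ndt7 ndt5
  have fin21 : (openSegment ℝ q₃ q₁ ∩ openSegment ℝ p₂ p₃).Finite := sub21.finite
  have sub22 : (openSegment ℝ q₃ q₁ ∩ openSegment ℝ p₃ p₁).Subsingleton := seg_inter_subsingleton ndt10 ndt8
  have fin22 : (openSegment ℝ q₃ q₁ ∩ openSegment ℝ p₃ p₁).Finite := sub22.finite
  have pE01 : openSegment ℝ p₁ p₂ ∩ openSegment ℝ p₂ p₃ = ∅ := seg_adjacent_disjoint p₁ p₂ p₃ wP2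
  have pE12 : openSegment ℝ p₂ p₃ ∩ openSegment ℝ p₃ p₁ = ∅ := seg_adjacent_disjoint p₂ p₃ p₁ wP3
  have pE02 : openSegment ℝ p₁ p₂ ∩ openSegment ℝ p₃ p₁ = ∅ := by rw [Set.inter_comm]; exact seg_adjacent_disjoint p₃ p₁ p₂ ndt0
  have qE01 : openSegment ℝ q₁ q₂ ∩ openSegment ℝ q₂ q₃ = ∅ := seg_adjacent_disjoint q₁ q₂ q₃ wQ2
  have qE12 : openSegment ℝ q₂ q₃ ∩ openSegment ℝ q₃ q₁ = ∅ := seg_adjacent_disjoint q₂ q₃ q₁ wQ3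
  have qE02 : openSegment ℝ q₁ q₂ ∩ openSegment ℝ q₃ q₁ = ∅ := by rw [Set.inter_comm]; exact seg_adjacent_disjoint q₃ q₁ q₂ ndt1
  have hdec1 : (openSegment ℝ p₁ p₂ ∪ openSegment ℝ p₂ p₃ ∪ openSegment ℝ p₃ p₁) ∩
      (openSegment ℝ q₁ q₂ ∪ openSegment ℝ q₂ q₃ ∪ openSegment ℝ q₃ q₁) =
      (openSegment ℝ q₁ q₂ ∩ (openSegment ℝ p₁ p₂ ∪ openSegment ℝ p₂ p₃ ∪ openSegment ℝ p₃ p₁)) ∪ (openSegment ℝ q₂ q₃ ∩ (openSegment ℝ p₁ p₂ ∪ openSegment ℝ p₂ p₃ ∪ openSegment ℝ p₃ p₁)) ∪ (openSegment ℝ q₃ q₁ ∩ (openSegment ℝ p₁ p₂ ∪ openSegment ℝ p₂ p₃ ∪ openSegment ℝ p₃ p₁)) := by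
    rw [Set.inter_comm, Set.union_inter_distrib_right, Set.union_inter_distrib_right]
  have hg0 : (openSegment ℝ q₁ q₂ ∩ (openSegment ℝ p₁ p₂ ∪ openSegment ℝ p₂ p₃ ∪ openSegment ℝ p₃ p₁)) = (openSegment ℝ q₁ q₂ ∩ openSegment ℝ p₁ p₂) ∪ (openSegment ℝ q₁ q₂ ∩ openSegment ℝ p₂ p₃) ∪ (openSegment ℝ q₁ q₂ ∩ openSegment ℝ p₃ p₁) := by
    rw [Set.inter_union_distrib_left, Set.inter_union_distrib_left]
  have hg1 : (openSegment ℝ q₂ q₃ ∩ (openSegment ℝ p₁ p₂ ∪ openSegment ℝ p₂ p₃ ∪ openSegment ℝ p₃ p₁)) = (openSegment ℝ q₂ q₃ ∩ openSegment ℝ p₁ p₂) ∪ (openSegment ℝ q₂ q₃ ∩ openSegment ℝ p₂ p₃) ∪ (openSegment ℝ q₂ q₃ ∩ openSegment ℝ p₃ p₁) := by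
    rw [Set.inter_union_distrib_left, Set.inter_union_distrib_left]
  have hg2 : (openSegment ℝ q₃ q₁ ∩ (openSegment ℝ p₁ p₂ ∪ openSegment ℝ p₂ p₃ ∪ openSegment ℝ p₃ p₁)) = (openSegment ℝ q₃ q₁ ∩ openSegment ℝ p₁ p₂) ∪ (openSegment ℝ q₃ q₁ ∩ openSegment ℝ p₂ p₃) ∪ (openSegment ℝ q₃ q₁ ∩ openSegment ℝ p₃ p₁) := by
    rw [Set.inter_union_distrib_left, Set.inter_union_distrib_left]
  have djg0a : Disjoint (openSegment ℝ q₁ q₂ ∩ openSegment ℝ p₁ p₂) (openSegment ℝ q₁ q₂ ∩ openSegment ℝ p₂ p₃) := disjT pE01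
  have djg0b : Disjoint ((openSegment ℝ q₁ q₂ ∩ openSegment ℝ p₁ p₂) ∪ (openSegment ℝ q₁ q₂ ∩ openSegment ℝ p₂ p₃)) (openSegment ℝ q₁ q₂ ∩ openSegment ℝ p₃ p₁) := Set.disjoint_union_left.2 ⟨disjT pE02, disjT pE12⟩
  have finG0 : (openSegment ℝ q₁ q₂ ∩ (openSegment ℝ p₁ p₂ ∪ openSegment ℝ p₂ p₃ ∪ openSegment ℝ p₃ p₁)).Finite := by rw [hg0]; exact (fin00.union fin01).union fin02
  have nG0 : (openSegment ℝ q₁ q₂ ∩ (openSegment ℝ p₁ p₂ ∪ openSegment ℝ p₂ p₃ ∪ openSegment ℝ p₃ p₁)).ncard = cnt (openSegment ℝ q₁ q₂ ∩ openSegment ℝ p₁ p₂).Nonempty + cnt (openSegment ℝ q₁ q₂ ∩ openSegment ℝ p₂ p₃).Nonempty + cnt (openSegment ℝ q₁ q₂ ∩ openSegment ℝ p₃ p₁).Nonempty := by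
    rw [hg0, Set.ncard_union_eq djg0b (fin00.union fin01) fin02,
      Set.ncard_union_eq djg0a fin00 fin01,
      cnt_of_subsingleton sub00, cnt_of_subsingleton sub01, cnt_of_subsingleton sub02]
  have djg1a : Disjoint (openSegment ℝ q₂ q₃ ∩ openSegment ℝ p₁ p₂) (openSegment ℝ q₂ q₃ ∩ openSegment ℝ p₂ p₃) := disjT pE01
  have djg1b : Disjoint ((openSegment ℝ q₂ q₃ ∩ openSegment ℝ p₁ p₂) ∪ (openSegment ℝ q₂ q₃ ∩ openSegment ℝ p₂ p₃)) (openSegment ℝ q₂ q₃ ∩ openSegment ℝ p₃ p₁) := Set.disjoint_union_left.2 ⟨disjT pE02, disjT pE12⟩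
  have finG1 : (openSegment ℝ q₂ q₃ ∩ (openSegment ℝ p₁ p₂ ∪ openSegment ℝ p₂ p₃ ∪ openSegment ℝ p₃ p₁)).Finite := by rw [hg1]; exact (fin10.union fin11).union fin12
  have nG1 : (openSegment ℝ q₂ q₃ ∩ (openSegment ℝ p₁ p₂ ∪ openSegment ℝ p₂ p₃ ∪ openSegment ℝ p₃ p₁)).ncard = cnt (openSegment ℝ q₂ q₃ ∩ openSegment ℝ p₁ p₂).Nonempty + cnt (openSegment ℝ q₂ q₃ ∩ openSegment ℝ p₂ p₃).Nonempty + cnt (openSegment ℝ q₂ q₃ ∩ openSegment ℝ p₃ p₁).Nonempty := by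
    rw [hg1, Set.ncard_union_eq djg1b (fin10.union fin11) fin12,
      Set.ncard_union_eq djg1a fin10 fin11,
      cnt_of_subsingleton sub10, cnt_of_subsingleton sub11, cnt_of_subsingleton sub12]
  have djg2a : Disjoint (openSegment ℝ q₃ q₁ ∩ openSegment ℝ p₁ p₂) (openSegment ℝ q₃ q₁ ∩ openSegment ℝ p₂ p₃) := disjT pE01
  have djg2b : Disjoint ((openSegment ℝ q₃ q₁ ∩ openSegment ℝ p₁ p₂) ∪ (openSegment ℝ q₃ q₁ ∩ openSegment ℝ p₂ p₃)) (openSegment ℝ q₃ q₁ ∩ openSegment ℝ p₃ p₁) := Set.disjoint_union_left.2 ⟨disjT pE02, disjT pE12⟩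
  have finG2 : (openSegment ℝ q₃ q₁ ∩ (openSegment ℝ p₁ p₂ ∪ openSegment ℝ p₂ p₃ ∪ openSegment ℝ p₃ p₁)).Finite := by rw [hg2]; exact (fin20.union fin21).union fin22
  have nG2 : (openSegment ℝ q₃ q₁ ∩ (openSegment ℝ p₁ p₂ ∪ openSegment ℝ p₂ p₃ ∪ openSegment ℝ p₃ p₁)).ncard = cnt (openSegment ℝ q₃ q₁ ∩ openSegment ℝ p₁ p₂).Nonempty + cnt (openSegment ℝ q₃ q₁ ∩ openSegment ℝ p₂ p₃).Nonempty + cnt (openSegment ℝ q₃ q₁ ∩ openSegment ℝ p₃ p₁).Nonempty := by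
    rw [hg2, Set.ncard_union_eq djg2b (fin20.union fin21) fin22,
      Set.ncard_union_eq djg2a fin20 fin21,
      cnt_of_subsingleton sub20, cnt_of_subsingleton sub21, cnt_of_subsingleton sub22]
  have djG01 : Disjoint (openSegment ℝ q₁ q₂ ∩ (openSegment ℝ p₁ p₂ ∪ openSegment ℝ p₂ p₃ ∪ openSegment ℝ p₃ p₁)) (openSegment ℝ q₂ q₃ ∩ (openSegment ℝ p₁ p₂ ∪ openSegment ℝ p₂ p₃ ∪ openSegment ℝ p₃ p₁)) := disjS qE01
  have djG2 : Disjoint ((openSegment ℝ q₁ q₂ ∩ (openSegment ℝ p₁ p₂ ∪ openSegment ℝ p₂ p₃ ∪ openSegment ℝ p₃ p₁)) ∪ (openSegment ℝ q₂ q₃ ∩ (openSegment ℝ p₁ p₂ ∪ openSegment ℝ p₂ p₃ ∪ openSegment ℝ p₃ p₁))) (openSegment ℝ q₃ q₁ ∩ (openSegment ℝ p₁ p₂ ∪ openSegment ℝ p₂ p₃ ∪ openSegment ℝ p₃ p₁)) := Set.disjoint_union_left.2 ⟨disjS qE02, disjS qE12⟩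
  constructor
  · rw [hdec1]
    exact (finG0.union finG1).union finG2
  · rw [hdec1, Set.ncard_union_eq djG2 (finG0.union finG1) finG2,
      Set.ncard_union_eq djG01 finG0 finG1, nG0, nG1, nG2, Nat.even_iff]
    omega
end

section
/- Let ρ be an IC-planar straight-line drawing of a finite simple graph G, and let C₁ and C₂ be two 3-cycles of G with no vertex in common. Then no edge of C₁ crosses an edge of C₂ in ρ. -/
noncomputable section DTC

def sg (u v w : ℝ × ℝ) : ℝ := (v.1-u.1)*(w.2-u.2) - (v.2-u.2)*(w.1-u.1)

lemma sg_cyc (u v w : ℝ × ℝ) : sg u v w = sg v w u := by simp [sg]; ring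

lemma mem_os {x y z : ℝ × ℝ} :
    z ∈ openSegment ℝ x y ↔ ∃ t : ℝ, 0 < t ∧ t < 1 ∧ z = (1 - t) • x + t • y := by
  rw [openSegment_eq_image]
  constructor
  · rintro ⟨t, ht, rfl⟩; exact ⟨t, ht.1, ht.2, rfl⟩
  · rintro ⟨t, h0, h1, rfl⟩; exact ⟨t, ⟨h0, h1⟩, rfl⟩

lemma comb_fst (t : ℝ) (x y : ℝ × ℝ) : ((1-t) • x + t • y).1 = (1-t)*x.1 + t*y.1 := by simp
lemma comb_snd (t : ℝ) (x y : ℝ × ℝ) : ((1-t) • x + t • y).2 = (1-t)*x.2 + t*y.2 := by simp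

lemma sg3_comb (A B x y : ℝ × ℝ) (t : ℝ) :
    sg A B ((1-t) • x + t • y) = (1-t) * sg A B x + t * sg A B y := by
  simp only [sg, comb_fst, comb_snd]; ring

lemma sg1_comb (B C x y : ℝ × ℝ) (t : ℝ) :
    sg ((1-t) • x + t • y) B C = (1-t) * sg x B C + t * sg y B C := by
  simp only [sg, comb_fst, comb_snd]; ring

lemma sg2_comb (A C x y : ℝ × ℝ) (t : ℝ) :
    sg A ((1-t) • x + t • y) C = (1-t) * sg A x C + t * sg A y C := by
  simp only [sg, comb_fst, comb_snd]; ring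

lemma sg_sum (A B C x : ℝ × ℝ) : sg x B C + sg A x C + sg A B x = sg A B C := by
  simp [sg]; ring

lemma bary_fst (A B C x : ℝ × ℝ) :
    sg x B C * A.1 + sg A x C * B.1 + sg A B x * C.1 = sg A B C * x.1 := by
  simp [sg]; ring

lemma bary_snd (A B C x : ℝ × ℝ) :
    sg x B C * A.2 + sg A x C * B.2 + sg A B x * C.2 = sg A B C * x.2 := by
  simp [sg]; ring

/-- barycentric coordinates -/
def ca (A B C x : ℝ × ℝ) : ℝ := sg x B C / sg A B C
def cb (A B C x : ℝ × ℝ) : ℝ := sg A x C / sg A B C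
def cc (A B C x : ℝ × ℝ) : ℝ := sg A B x / sg A B C

variable {A B C : ℝ × ℝ}

lemma c_sum (hσ : sg A B C ≠ 0) (x : ℝ × ℝ) : ca A B C x + cb A B C x + cc A B C x = 1 := by
  unfold ca cb cc; rw [← add_div, ← add_div, sg_sum, div_self hσ]

lemma c_rep (hσ : sg A B C ≠ 0) (x : ℝ × ℝ) :
    ca A B C x • A + cb A B C x • B + cc A B C x • C = x := by
  unfold ca cb cc
  apply Prod.ext <;> simp only [Prod.fst_add, Prod.snd_add, Prod.smul_fst, Prod.smul_snd,
    smul_eq_mul]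
  · field_simp; linear_combination bary_fst A B C x
  · field_simp; linear_combination bary_snd A B C x

lemma ca_comb (x y : ℝ × ℝ) (t : ℝ) :
    ca A B C ((1-t) • x + t • y) = (1-t) * ca A B C x + t * ca A B C y := by
  unfold ca; rw [sg1_comb]; ring

lemma cb_comb (x y : ℝ × ℝ) (t : ℝ) :
    cb A B C ((1-t) • x + t • y) = (1-t) * cb A B C x + t * cb A B C y := by
  unfold cb; rw [sg2_comb]; ring

lemma cc_comb (x y : ℝ × ℝ) (t : ℝ) :
    cc A B C ((1-t) • x + t • y) = (1-t) * cc A B C x + t * cc A B C y := by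
  unfold cc; rw [sg3_comb]; ring

lemma sg_self1 (A B : ℝ × ℝ) : sg A A B = 0 := by simp [sg]
lemma sg_self2 (A B : ℝ × ℝ) : sg A B A = 0 := by simp [sg]
lemma sg_self3 (A B : ℝ × ℝ) : sg A B B = 0 := by simp [sg]; ring

lemma ca_A (hσ : sg A B C ≠ 0) : ca A B C A = 1 := div_self hσ
lemma ca_B : ca A B C B = 0 := by unfold ca; rw [sg_self1]; simp
lemma ca_C : ca A B C C = 0 := by unfold ca; rw [show sg C B C = 0 from by simp [sg]]; simp
lemma cb_A : cb A B C A = 0 := by unfold cb; rw [sg_self1]; simp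
lemma cb_B (hσ : sg A B C ≠ 0) : cb A B C B = 1 := div_self hσ
lemma cb_C : cb A B C C = 0 := by unfold cb; rw [sg_self3]; simp
lemma cc_A : cc A B C A = 0 := by unfold cc; rw [sg_self2]; simp
lemma cc_B : cc A B C B = 0 := by unfold cc; rw [sg_self3]; simp
lemma cc_C (hσ : sg A B C ≠ 0) : cc A B C C = 1 := div_self hσ

lemma mem_AB_iff (hσ : sg A B C ≠ 0) (x : ℝ × ℝ) :
    x ∈ openSegment ℝ A B ↔ cc A B C x = 0 ∧ 0 < ca A B C x ∧ 0 < cb A B C x := by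
  constructor
  · rw [mem_os]; rintro ⟨t, h0, h1, rfl⟩
    rw [ca_comb, cb_comb, cc_comb, ca_A hσ, ca_B, cb_A, cb_B hσ, cc_A, cc_B]
    refine ⟨by ring, by nlinarith, by nlinarith⟩
  · rintro ⟨h0, h1, h2⟩
    rw [mem_os]
    refine ⟨cb A B C x, h2, ?_, ?_⟩
    · nlinarith [c_sum hσ x]
    · have hca : 1 - cb A B C x = ca A B C x := by have := c_sum hσ x; linarith
      rw [hca]
      have := c_rep hσ x
      rw [h0, zero_smul, add_zero] at this
      exact this.symm

lemma eq_C_of (hσ : sg A B C ≠ 0) {x : ℝ × ℝ} (h1 : ca A B C x = 0) (h2 : cb A B C x = 0) :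
    x = C := by
  have h3 : cc A B C x = 1 := by have := c_sum hσ x; linarith
  have := c_rep hσ x
  rw [h1, h2, h3, zero_smul, zero_smul, one_smul, zero_add, zero_add] at this
  exact this.symm

lemma ca_rot (x : ℝ × ℝ) : ca B C A x = cb A B C x := by
  unfold ca cb; rw [show sg x C A = sg A x C from (sg_cyc A x C).symm, show sg B C A = sg A B C from (sg_cyc A B C).symm]
lemma cb_rot (x : ℝ × ℝ) : cb B C A x = cc A B C x := by
  unfold cb cc; rw [show sg B x A = sg A B x from (sg_cyc A B x).symm, show sg B C A = sg A B C from (sg_cyc A B C).symm]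
lemma cc_rot (x : ℝ × ℝ) : cc B C A x = ca A B C x := by
  unfold cc ca; rw [show sg B C x = sg x B C from (sg_cyc x B C).symm, show sg B C A = sg A B C from (sg_cyc A B C).symm]

lemma sg_rot : sg B C A = sg A B C := (sg_cyc A B C).symm

lemma mem_BC_iff (hσ : sg A B C ≠ 0) (x : ℝ × ℝ) :
    x ∈ openSegment ℝ B C ↔ ca A B C x = 0 ∧ 0 < cb A B C x ∧ 0 < cc A B C x := by
  have hσ' : sg B C A ≠ 0 := by rw [sg_rot]; exact hσ
  rw [mem_AB_iff hσ' x, ca_rot (A:=A) (B:=B) (C:=C), cb_rot (A:=A) (B:=B) (C:=C), cc_rot (A:=A) (B:=B) (C:=C)]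

lemma caCAB (x : ℝ × ℝ) : ca C A B x = cc A B C x :=
  (ca_rot (A := B) (B := C) (C := A) x).trans (cb_rot x)
lemma cbCAB (x : ℝ × ℝ) : cb C A B x = ca A B C x :=
  (cb_rot (A := B) (B := C) (C := A) x).trans (cc_rot x)
lemma ccCAB (x : ℝ × ℝ) : cc C A B x = cb A B C x :=
  (cc_rot (A := B) (B := C) (C := A) x).trans (ca_rot x)

lemma mem_CA_iff (hσ : sg A B C ≠ 0) (x : ℝ × ℝ) :
    x ∈ openSegment ℝ C A ↔ cb A B C x = 0 ∧ 0 < cc A B C x ∧ 0 < ca A B C x := by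
  have hσ' : sg C A B ≠ 0 := by rw [sg_rot, sg_rot]; exact hσ
  rw [mem_AB_iff hσ' x, ccCAB (A:=A) (B:=B) (C:=C), caCAB (A:=A) (B:=B) (C:=C), cbCAB (A:=A) (B:=B) (C:=C)]

lemma eq_A_of (hσ : sg A B C ≠ 0) {x : ℝ × ℝ} (h1 : cb A B C x = 0) (h2 : cc A B C x = 0) :
    x = A := by
  have hσ' : sg B C A ≠ 0 := by rw [sg_rot]; exact hσ
  exact eq_C_of hσ' (by rw [ca_rot]; exact h1) (by rw [cb_rot]; exact h2)

lemma eq_B_of (hσ : sg A B C ≠ 0) {x : ℝ × ℝ} (h1 : cc A B C x = 0) (h2 : ca A B C x = 0) :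
    x = B := by
  have hσ' : sg C A B ≠ 0 := by rw [sg_rot, sg_rot]; exact hσ
  refine eq_C_of hσ' ?_ ?_
  · rw [caCAB]; exact h1
  · rw [cbCAB]; exact h2

/-! ### 1-D exit machinery -/

def zf (p q : ℝ) : ℝ := if q ≤ 0 then p / (p - q) else 1

lemma zf_pos {p q : ℝ} (h0 : 0 ≤ p) (h : p = 0 → 0 < q) : 0 < zf p q ∧ zf p q ≤ 1 := by
  unfold zf
  split_ifs with hq
  · have hp : 0 < p := by
      rcases h0.lt_or_eq with h'|h'
      · exact h'
      · exact absurd (h h'.symm) (not_lt.2 hq)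
    have hpq : 0 < p - q := by linarith
    constructor
    · positivity
    · rw [div_le_one hpq]; linarith
  · exact ⟨one_pos, le_refl 1⟩

lemma zf_nonneg_on {p q t : ℝ} (h0 : 0 ≤ p) (h : p = 0 → 0 < q) (ht0 : 0 ≤ t)
    (ht : t ≤ zf p q) : 0 ≤ (1-t)*p + t*q := by
  unfold zf at ht
  split_ifs at ht with hq
  · have hp : 0 < p := by
      rcases h0.lt_or_eq with h'|h'
      · exact h'
      · exact absurd (h h'.symm) (not_lt.2 hq)
    have hpq : 0 < p - q := by linarith
    rw [le_div_iff₀ hpq] at ht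
    nlinarith
  · nlinarith [lt_of_not_ge hq]

lemma zf_zero {p q : ℝ} (h0 : 0 ≤ p) (h : p = 0 → 0 < q) (hq : q ≤ 0) :
    (1 - zf p q)*p + zf p q * q = 0 := by
  have hp : 0 < p := by
    rcases h0.lt_or_eq with h'|h'
    · exact h'
    · exact absurd (h h'.symm) (not_lt.2 hq)
  have hpq : 0 < p - q := by linarith
  unfold zf
  rw [if_pos hq]
  field_simp
  ring

lemma exitL {f0 f1 g0 g1 h0 h1 : ℝ}
    (hf0 : 0 ≤ f0) (hg0 : 0 ≤ g0) (hh0 : 0 ≤ h0)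
    (hf : f0 = 0 → 0 < f1) (hg : g0 = 0 → 0 < g1) (hh : h0 = 0 → 0 < h1)
    (hv : f1 ≤ 0 ∨ g1 ≤ 0 ∨ h1 ≤ 0) :
    ∃ t : ℝ, 0 < t ∧ t ≤ 1 ∧
      0 ≤ (1-t)*f0+t*f1 ∧ 0 ≤ (1-t)*g0+t*g1 ∧ 0 ≤ (1-t)*h0+t*h1 ∧
      ((1-t)*f0+t*f1 = 0 ∨ (1-t)*g0+t*g1 = 0 ∨ (1-t)*h0+t*h1 = 0) := by
  obtain ⟨hfp, hfl⟩ := zf_pos hf0 hf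
  obtain ⟨hgp, hgl⟩ := zf_pos hg0 hg
  obtain ⟨hhp, hhl⟩ := zf_pos hh0 hh
  set t := min (zf f0 f1) (min (zf g0 g1) (zf h0 h1)) with htdef
  have htf : t ≤ zf f0 f1 := min_le_left _ _
  have htg : t ≤ zf g0 g1 := le_trans (min_le_right _ _) (min_le_left _ _)
  have hth : t ≤ zf h0 h1 := le_trans (min_le_right _ _) (min_le_right _ _)
  have htp : 0 < t := lt_min hfp (lt_min hgp hhp)
  have htl : t ≤ 1 := le_trans htf hfl
  refine ⟨t, htp, htl, zf_nonneg_on hf0 hf htp.le htf, zf_nonneg_on hg0 hg htp.le htg,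
    zf_nonneg_on hh0 hh htp.le hth, ?_⟩
  have key : ∀ p q : ℝ, 0 ≤ p → (p = 0 → 0 < q) → q ≤ 0 → t = zf p q →
      (1-t)*p + t*q = 0 := by
    intro p q a1 a2 a3 a4; rw [a4]; exact zf_zero a1 a2 a3
  have hmin : t = zf f0 f1 ∨ t = zf g0 g1 ∨ t = zf h0 h1 := by
    rcases min_cases (zf f0 f1) (min (zf g0 g1) (zf h0 h1)) with h'|h'
    · exact Or.inl h'.1
    · rcases min_cases (zf g0 g1) (zf h0 h1) with h''|h''
      · exact Or.inr (Or.inl (h'.1.trans h''.1))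
      · exact Or.inr (Or.inr (h'.1.trans h''.1))
  have all1 : t = 1 → ((1-t)*f0+t*f1 = 0 ∨ (1-t)*g0+t*g1 = 0 ∨ (1-t)*h0+t*h1 = 0) := by
    intro ht1
    rcases hv with hv'|hv'|hv'
    · exact Or.inl (key _ _ hf0 hf hv' (le_antisymm htf (by rw [ht1]; exact hfl)))
    · exact Or.inr (Or.inl (key _ _ hg0 hg hv' (le_antisymm htg (by rw [ht1]; exact hgl))))
    · exact Or.inr (Or.inr (key _ _ hh0 hh hv' (le_antisymm hth (by rw [ht1]; exact hhl))))
  rcases hmin with hm|hm|hm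
  · by_cases h1 : f1 ≤ 0
    · exact Or.inl (key _ _ hf0 hf h1 hm)
    · exact all1 (by rw [hm]; unfold zf; rw [if_neg h1])
  · by_cases h1 : g1 ≤ 0
    · exact Or.inr (Or.inl (key _ _ hg0 hg h1 hm))
    · exact all1 (by rw [hm]; unfold zf; rw [if_neg h1])
  · by_cases h1 : h1 ≤ 0
    · exact Or.inr (Or.inr (key _ _ hh0 hh h1 hm))
    · exact all1 (by rw [hm]; unfold zf; rw [if_neg h1])

lemma exit2 (hσ : sg A B C ≠ 0) (u v : ℝ × ℝ)
    (hau : 0 ≤ ca A B C u) (hbu : 0 ≤ cb A B C u) (hcu : 0 ≤ cc A B C u)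
    (hav : ca A B C u = 0 → 0 < ca A B C v)
    (hbv : cb A B C u = 0 → 0 < cb A B C v)
    (hcv : cc A B C u = 0 → 0 < cc A B C v)
    (hneg : ca A B C v ≤ 0 ∨ cb A B C v ≤ 0 ∨ cc A B C v ≤ 0) :
    ∃ q : ℝ × ℝ, (q ∈ openSegment ℝ u v ∨ q = v) ∧
      (q ∈ openSegment ℝ A B ∨ q ∈ openSegment ℝ B C ∨ q ∈ openSegment ℝ C A ∨
        q = A ∨ q = B ∨ q = C) := by
  obtain ⟨t, ht0, ht1, hfa, hfb, hfc, hzero⟩ := exitL hau hbu hcu hav hbv hcv hneg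
  set q : ℝ × ℝ := (1-t) • u + t • v with hq
  have hqa : ca A B C q = (1-t) * ca A B C u + t * ca A B C v := ca_comb u v t
  have hqb : cb A B C q = (1-t) * cb A B C u + t * cb A B C v := cb_comb u v t
  have hqc : cc A B C q = (1-t) * cc A B C u + t * cc A B C v := cc_comb u v t
  refine ⟨q, ?_, ?_⟩
  · rcases ht1.lt_or_eq with h|h
    · exact Or.inl (mem_os.2 ⟨t, ht0, h, rfl⟩)
    · right; rw [hq, h]; simp
  · -- classification by zero coordinate
    have ha' : 0 ≤ ca A B C q := by rw [hqa]; exact hfa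
    have hb' : 0 ≤ cb A B C q := by rw [hqb]; exact hfb
    have hc' : 0 ≤ cc A B C q := by rw [hqc]; exact hfc
    have hz : ca A B C q = 0 ∨ cb A B C q = 0 ∨ cc A B C q = 0 := by
      rw [hqa, hqb, hqc]; exact hzero
    rcases hz with hz|hz|hz
    · rcases hb'.lt_or_eq with hb|hb
      · rcases hc'.lt_or_eq with hc|hc
        · exact Or.inr (Or.inl ((mem_BC_iff hσ q).2 ⟨hz, hb, hc⟩))
        · exact Or.inr (Or.inr (Or.inr (Or.inr (Or.inl (eq_B_of hσ hc.symm hz)))))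
      · exact Or.inr (Or.inr (Or.inr (Or.inr (Or.inr (eq_C_of hσ hz hb.symm)))))
    · rcases hc'.lt_or_eq with hc|hc
      · rcases ha'.lt_or_eq with ha|ha
        · exact Or.inr (Or.inr (Or.inl ((mem_CA_iff hσ q).2 ⟨hz, hc, ha⟩)))
        · exact Or.inr (Or.inr (Or.inr (Or.inr (Or.inr (eq_C_of hσ ha.symm hz)))))
      · exact Or.inr (Or.inr (Or.inr (Or.inl (eq_A_of hσ hz hc.symm))))
    · rcases ha'.lt_or_eq with ha|ha
      · rcases hb'.lt_or_eq with hb|hb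
        · exact Or.inl ((mem_AB_iff hσ q).2 ⟨hz, ha, hb⟩)
        · exact Or.inr (Or.inr (Or.inr (Or.inl (eq_A_of hσ hb.symm hz))))
      · exact Or.inr (Or.inr (Or.inr (Or.inr (Or.inl (eq_B_of hσ hz ha.symm)))))

lemma os_sub {D E p : ℝ × ℝ} (hp : p ∈ openSegment ℝ D E) :
    openSegment ℝ p D ⊆ openSegment ℝ D E := by
  obtain ⟨s, hs0, hs1, rfl⟩ := mem_os.1 hp
  intro q hq
  obtain ⟨t, ht0, ht1, rfl⟩ := mem_os.1 hq
  refine mem_os.2 ⟨(1-t)*s, by nlinarith, by nlinarith, ?_⟩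
  module

lemma param_mem (A w : ℝ × ℝ) {t₁ t t₂ : ℝ} (h1 : t₁ < t) (h2 : t < t₂) :
    A + t • w ∈ openSegment ℝ (A + t₁ • w) (A + t₂ • w) := by
  have hd : 0 < t₂ - t₁ := by linarith
  refine mem_os.2 ⟨(t - t₁)/(t₂ - t₁), div_pos (by linarith) hd, ?_, ?_⟩
  · rw [div_lt_one hd]; linarith
  · have h1s : (1 : ℝ) - (t - t₁)/(t₂ - t₁) = (t₂ - t)/(t₂ - t₁) := by field_simp; ring
    rw [h1s]
    have : ((t₂ - t)/(t₂ - t₁)) • (A + t₁ • w) + ((t - t₁)/(t₂ - t₁)) • (A + t₂ • w)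
        = (((t₂ - t)/(t₂ - t₁)) + ((t - t₁)/(t₂ - t₁))) • A
          + (((t₂ - t)/(t₂ - t₁)) * t₁ + ((t - t₁)/(t₂ - t₁)) * t₂) • w := by module
    rw [this]
    have e1 : ((t₂ - t)/(t₂ - t₁)) + ((t - t₁)/(t₂ - t₁)) = 1 := by field_simp; ring
    have e2 : ((t₂ - t)/(t₂ - t₁)) * t₁ + ((t - t₁)/(t₂ - t₁)) * t₂ = t := by
      field_simp; ring
    rw [e1, e2, one_smul]

lemma colin_param {A B C : ℝ × ℝ} (hAB : A ≠ B) (h : sg A B C = 0) :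
    ∃ u : ℝ, C = A + u • (B - A) := by
  have hw : B - A ≠ 0 := sub_ne_zero.2 (Ne.symm hAB)
  by_cases h1 : B.1 - A.1 ≠ 0
  · refine ⟨(C.1 - A.1)/(B.1 - A.1), ?_⟩
    have h2 : C.2 - A.2 = (C.1 - A.1)/(B.1 - A.1) * (B.2 - A.2) := by
      field_simp
      simp [sg] at h
      linarith
    apply Prod.ext
    · simp only [Prod.fst_add, Prod.smul_fst, Prod.fst_sub, smul_eq_mul]
      field_simp; ring
    · simp only [Prod.snd_add, Prod.smul_snd, Prod.snd_sub, smul_eq_mul]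
      linarith
  · push_neg at h1
    have h2 : B.2 - A.2 ≠ 0 := by
      intro h2
      apply hw
      apply Prod.ext <;> simp only [Prod.fst_sub, Prod.snd_sub, Prod.fst_zero, Prod.snd_zero] <;> linarith
    refine ⟨(C.2 - A.2)/(B.2 - A.2), ?_⟩
    have h4 : C.1 - A.1 = 0 := by
      have hm : (B.2 - A.2) * (C.1 - A.1) = 0 := by unfold sg at h; linear_combination (C.2 - A.2) * h1 - h
      rcases mul_eq_zero.1 hm with h'|h'
      · exact absurd h' h2
      · exact h'
    have h3 : C.1 - A.1 = (C.2 - A.2)/(B.2 - A.2) * (B.1 - A.1) := by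
      rw [h1, h4]; ring
    apply Prod.ext
    · simp only [Prod.fst_add, Prod.smul_fst, Prod.fst_sub, smul_eq_mul]
      linarith
    · simp only [Prod.snd_add, Prod.smul_snd, Prod.snd_sub, smul_eq_mul]
      field_simp; ring

lemma param_inj {w : ℝ × ℝ} (hw : w ≠ 0) {A : ℝ × ℝ} {s t : ℝ}
    (h : A + s • w = A + t • w) : s = t := by
  have h2 : (s - t) • w = 0 := by
    have := add_left_cancel h
    rw [sub_smul, this, sub_self]
  rcases smul_eq_zero.1 h2 with h3|h3
  · linarith [sub_eq_zero.1 (by exact_mod_cast h3)]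
  · exact absurd h3 hw

lemma geom_main {A B C D E F : ℝ × ℝ}
    (hσ : sg A B C ≠ 0)
    (hsub : (openSegment ℝ A B ∩ openSegment ℝ D E).Subsingleton)
    (hABEF : openSegment ℝ A B ∩ openSegment ℝ E F = ∅)
    (hABFD : openSegment ℝ A B ∩ openSegment ℝ F D = ∅)
    (hBCDE : openSegment ℝ B C ∩ openSegment ℝ D E = ∅)
    (hBCEF : openSegment ℝ B C ∩ openSegment ℝ E F = ∅)
    (hBCFD : openSegment ℝ B C ∩ openSegment ℝ F D = ∅)
    (hCADE : openSegment ℝ C A ∩ openSegment ℝ D E = ∅)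
    (hCAEF : openSegment ℝ C A ∩ openSegment ℝ E F = ∅)
    (hCAFD : openSegment ℝ C A ∩ openSegment ℝ F D = ∅)
    (hADE : A ∉ openSegment ℝ D E) (hAEF : A ∉ openSegment ℝ E F) (hAFD : A ∉ openSegment ℝ F D)
    (hBDE : B ∉ openSegment ℝ D E) (hBEF : B ∉ openSegment ℝ E F) (hBFD : B ∉ openSegment ℝ F D)
    (hCDE : C ∉ openSegment ℝ D E) (hCEF : C ∉ openSegment ℝ E F) (hCFD : C ∉ openSegment ℝ F D)
    (hDAB : D ∉ openSegment ℝ A B) (hDBC : D ∉ openSegment ℝ B C) (hDCA : D ∉ openSegment ℝ C A)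
    (hEAB : E ∉ openSegment ℝ A B) (hEBC : E ∉ openSegment ℝ B C) (hECA : E ∉ openSegment ℝ C A)
    (hFAB : F ∉ openSegment ℝ A B) (hFBC : F ∉ openSegment ℝ B C) (hFCA : F ∉ openSegment ℝ C A)
    (hDA : D ≠ A) (hDB : D ≠ B) (hDC : D ≠ C)
    (hEA : E ≠ A) (hEB : E ≠ B) (hEC : E ≠ C)
    (hFA : F ≠ A) (hFB : F ≠ B) (hFC : F ≠ C)
    {p : ℝ × ℝ} (hpAB : p ∈ openSegment ℝ A B) (hpDE : p ∈ openSegment ℝ D E)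
    (hccD : 0 < cc A B C D) (hccE : cc A B C E < 0) : False := by
  have hDE : D ≠ E := fun h => by rw [h] at hccD; linarith
  have hpD : p ≠ D := fun h => hDAB (h ▸ hpAB)
  obtain ⟨hpc, hpa, hpb⟩ := (mem_AB_iff hσ p).1 hpAB
  have handle : ∀ (q v : ℝ × ℝ) (S : Set (ℝ × ℝ)),
      (q ∈ S ∨ q = v) →
      openSegment ℝ A B ∩ S = ∅ → openSegment ℝ B C ∩ S = ∅ → openSegment ℝ C A ∩ S = ∅ →
      A ∉ S → B ∉ S → C ∉ S →
      v ∉ openSegment ℝ A B → v ∉ openSegment ℝ B C → v ∉ openSegment ℝ C A →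
      v ≠ A → v ≠ B → v ≠ C →
      (q ∈ openSegment ℝ A B ∨ q ∈ openSegment ℝ B C ∨ q ∈ openSegment ℝ C A ∨
        q = A ∨ q = B ∨ q = C) → False := by
    intro q v S hqS e1 e2 e3 nA nB nC nv1 nv2 nv3 nva nvb nvc hloc
    rcases hqS with hq|rfl
    · rcases hloc with h|h|h|rfl|rfl|rfl
      · exact Set.eq_empty_iff_forall_notMem.1 e1 q ⟨h, hq⟩
      · exact Set.eq_empty_iff_forall_notMem.1 e2 q ⟨h, hq⟩
      · exact Set.eq_empty_iff_forall_notMem.1 e3 q ⟨h, hq⟩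
      · exact nA hq
      · exact nB hq
      · exact nC hq
    · rcases hloc with h|h|h|h|h|h
      · exact nv1 h
      · exact nv2 h
      · exact nv3 h
      · exact nva h
      · exact nvb h
      · exact nvc h
  -- Step 1: D is interior
  have hD_int : 0 < ca A B C D ∧ 0 < cb A B C D := by
    by_contra hcon
    have hneg : ca A B C D ≤ 0 ∨ cb A B C D ≤ 0 ∨ cc A B C D ≤ 0 := by
      by_contra h; push_neg at h; exact hcon ⟨h.1, h.2.1⟩
    obtain ⟨q, hq1, hq2⟩ := exit2 hσ p D hpa.le hpb.le (le_of_eq hpc.symm)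
      (fun h => absurd h hpa.ne') (fun h => absurd h hpb.ne') (fun _ => hccD) hneg
    refine handle q D (openSegment ℝ D E \ {p}) ?_ ?_ ?_ ?_
      (fun h => hADE h.1) (fun h => hBDE h.1) (fun h => hCDE h.1)
      hDAB hDBC hDCA hDA hDB hDC hq2
    · rcases hq1 with h|h
      · refine Or.inl ⟨os_sub hpDE h, fun hqp => ?_⟩
        rw [Set.mem_singleton_iff] at hqp
        rw [hqp] at h
        exact hpD (left_mem_openSegment_iff.1 h)
      · exact Or.inr h
    · apply Set.eq_empty_iff_forall_notMem.2
      rintro x ⟨hx1, hx2, hx3⟩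
      exact hx3 (hsub ⟨hx1, hx2⟩ ⟨hpAB, hpDE⟩)
    · apply Set.eq_empty_iff_forall_notMem.2
      rintro x ⟨hx1, hx2, _⟩
      exact Set.eq_empty_iff_forall_notMem.1 hBCDE x ⟨hx1, hx2⟩
    · apply Set.eq_empty_iff_forall_notMem.2
      rintro x ⟨hx1, hx2, _⟩
      exact Set.eq_empty_iff_forall_notMem.1 hCADE x ⟨hx1, hx2⟩
  obtain ⟨hDa, hDb⟩ := hD_int
  -- Step 2: F is interior
  have hF_int : 0 < ca A B C F ∧ 0 < cb A B C F ∧ 0 < cc A B C F := by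
    by_contra hcon
    have hneg : ca A B C F ≤ 0 ∨ cb A B C F ≤ 0 ∨ cc A B C F ≤ 0 := by
      by_contra h; push_neg at h; exact hcon ⟨h.1, h.2.1, h.2.2⟩
    obtain ⟨q, hq1, hq2⟩ := exit2 hσ D F hDa.le hDb.le hccD.le
      (fun h => absurd h hDa.ne') (fun h => absurd h hDb.ne') (fun h => absurd h hccD.ne') hneg
    refine handle q F (openSegment ℝ F D) ?_ hABFD hBCFD hCAFD hAFD hBFD hCFD
      hFAB hFBC hFCA hFA hFB hFC hq2
    rcases hq1 with h|h
    · exact Or.inl ((openSegment_symm ℝ D F) ▸ h)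
    · exact Or.inr h
  obtain ⟨hFa, hFb, hFc⟩ := hF_int
  -- Step 3: walk from F to E
  obtain ⟨q, hq1, hq2⟩ := exit2 hσ F E hFa.le hFb.le hFc.le
    (fun h => absurd h hFa.ne') (fun h => absurd h hFb.ne') (fun h => absurd h hFc.ne')
    (Or.inr (Or.inr hccE.le))
  refine handle q E (openSegment ℝ E F) ?_ hABEF hBCEF hCAEF hAEF hBEF hCEF
    hEAB hEBC hECA hEA hEB hEC hq2
  rcases hq1 with h|h
  · exact Or.inl ((openSegment_symm ℝ F E) ▸ h)
  · exact Or.inr h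

lemma geom {A B C D E F : ℝ × ℝ} (hAB : A ≠ B) (hDE : D ≠ E)
    (hsub : (openSegment ℝ A B ∩ openSegment ℝ D E).Subsingleton)
    (hABEF : openSegment ℝ A B ∩ openSegment ℝ E F = ∅)
    (hABFD : openSegment ℝ A B ∩ openSegment ℝ F D = ∅)
    (hBCDE : openSegment ℝ B C ∩ openSegment ℝ D E = ∅)
    (hBCEF : openSegment ℝ B C ∩ openSegment ℝ E F = ∅)
    (hBCFD : openSegment ℝ B C ∩ openSegment ℝ F D = ∅)
    (hCADE : openSegment ℝ C A ∩ openSegment ℝ D E = ∅)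
    (hCAEF : openSegment ℝ C A ∩ openSegment ℝ E F = ∅)
    (hCAFD : openSegment ℝ C A ∩ openSegment ℝ F D = ∅)
    (hADE : A ∉ openSegment ℝ D E) (hAEF : A ∉ openSegment ℝ E F) (hAFD : A ∉ openSegment ℝ F D)
    (hBDE : B ∉ openSegment ℝ D E) (hBEF : B ∉ openSegment ℝ E F) (hBFD : B ∉ openSegment ℝ F D)
    (hCDE : C ∉ openSegment ℝ D E) (hCEF : C ∉ openSegment ℝ E F) (hCFD : C ∉ openSegment ℝ F D)
    (hDAB : D ∉ openSegment ℝ A B) (hDBC : D ∉ openSegment ℝ B C) (hDCA : D ∉ openSegment ℝ C A)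
    (hEAB : E ∉ openSegment ℝ A B) (hEBC : E ∉ openSegment ℝ B C) (hECA : E ∉ openSegment ℝ C A)
    (hFAB : F ∉ openSegment ℝ A B) (hFBC : F ∉ openSegment ℝ B C) (hFCA : F ∉ openSegment ℝ C A)
    (hDA : D ≠ A) (hDB : D ≠ B) (hDC : D ≠ C)
    (hEA : E ≠ A) (hEB : E ≠ B) (hEC : E ≠ C)
    (hFA : F ≠ A) (hFB : F ≠ B) (hFC : F ≠ C)
    {p : ℝ × ℝ} (hpAB : p ∈ openSegment ℝ A B) (hpDE : p ∈ openSegment ℝ D E) : False := by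
  have hw : B - A ≠ 0 := sub_ne_zero.2 (Ne.symm hAB)
  obtain ⟨t, ht0, ht1, hp⟩ := mem_os.1 hpAB
  have hpw : p = A + t • (B - A) := by rw [hp]; module
  by_cases hσ : sg A B C = 0
  · -- degenerate triangle ABC
    obtain ⟨u, hu⟩ := colin_param hAB hσ
    have hpC : p ≠ C := fun h => hCDE (h ▸ hpDE)
    have htu : t ≠ u := by
      intro h
      exact hpC (by rw [hpw, h, ← hu])
    rcases htu.lt_or_gt with h|h
    · -- p strictly between A and C
      have hmem := param_mem A (B - A) (t₁ := 0) (t₂ := u) ht0 h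
      rw [zero_smul, add_zero, ← hu, ← hpw] at hmem
      rw [← openSegment_symm] at hmem
      exact Set.eq_empty_iff_forall_notMem.1 hCADE p ⟨hmem, hpDE⟩
    · -- p strictly between C and B
      have hmem := param_mem A (B - A) (t₁ := u) (t₂ := 1) h ht1
      rw [one_smul, ← hu, ← hpw, show A + (B - A) = B from by module] at hmem
      rw [← openSegment_symm] at hmem
      exact Set.eq_empty_iff_forall_notMem.1 hBCDE p ⟨hmem, hpDE⟩
  · obtain ⟨s, hs0, hs1, hps⟩ := mem_os.1 hpDE
    have hpcc : cc A B C p = 0 := ((mem_AB_iff hσ p).1 hpAB).1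
    have hcomb : cc A B C p = (1-s) * cc A B C D + s * cc A B C E := by
      rw [hps]; exact cc_comb D E s
    rcases lt_trichotomy (cc A B C D) 0 with hD'|hD'|hD'
    · -- swap D and E
      have hE' : 0 < cc A B C E := by nlinarith
      have sED : openSegment ℝ E D = openSegment ℝ D E := openSegment_symm ℝ E D
      have sDF : openSegment ℝ D F = openSegment ℝ F D := openSegment_symm ℝ D F
      have sFE : openSegment ℝ F E = openSegment ℝ E F := openSegment_symm ℝ F E
      exact geom_main (D := E) (E := D) (F := F) hσ
        (by rw [sED]; exact hsub)
        (by rw [sDF]; exact hABFD) (by rw [sFE]; exact hABEF)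
        (by rw [sED]; exact hBCDE) (by rw [sDF]; exact hBCFD) (by rw [sFE]; exact hBCEF)
        (by rw [sED]; exact hCADE) (by rw [sDF]; exact hCAFD) (by rw [sFE]; exact hCAEF)
        (by rw [sED]; exact hADE) (by rw [sDF]; exact hAFD) (by rw [sFE]; exact hAEF)
        (by rw [sED]; exact hBDE) (by rw [sDF]; exact hBFD) (by rw [sFE]; exact hBEF)
        (by rw [sED]; exact hCDE) (by rw [sDF]; exact hCFD) (by rw [sFE]; exact hCEF)
        hEAB hEBC hECA hDAB hDBC hDCA hFAB hFBC hFCA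
        hEA hEB hEC hDA hDB hDC hFA hFB hFC
        hpAB (by rw [sED]; exact hpDE) hE' hD'
    · -- D and E both on line AB
      have hE0 : cc A B C E = 0 := by
        have hs' : s * cc A B C E = 0 := by rw [hD'] at hcomb; linarith
        rcases mul_eq_zero.1 hs' with h|h
        · exact absurd h hs0.ne'
        · exact h
      have hD0 : sg A B D = 0 := by
        rcases div_eq_zero_iff.1 hD' with h|h
        · exact h
        · exact absurd h hσ
      have hE0' : sg A B E = 0 := by
        rcases div_eq_zero_iff.1 hE0 with h|h
        · exact h
        · exact absurd h hσ
      obtain ⟨tD, htD⟩ := colin_param hAB hD0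
      obtain ⟨tE, htE⟩ := colin_param hAB hE0'
      have hpw2 : p = A + ((1-s)*tD + s*tE) • (B - A) := by
        rw [hps, htD, htE]; module
      have htp : t = (1-s)*tD + s*tE := param_inj hw (hpw ▸ hpw2)
      have htDE : tD ≠ tE := by
        intro h; exact hDE (by rw [htD, htE, h])
      set lo := min tD tE with hlo_def
      set hi := max tD tE with hhi_def
      have hplo : lo < t := by
        rcases htDE.lt_or_gt with h|h
        · rw [hlo_def, min_eq_left h.le, htp]; nlinarith
        · rw [hlo_def, min_eq_right h.le, htp]; nlinarith
      have hphi : t < hi := by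
        rcases htDE.lt_or_gt with h|h
        · rw [hhi_def, max_eq_right h.le, htp]; nlinarith
        · rw [hhi_def, max_eq_left h.le, htp]; nlinarith
      set tq := (t + min 1 hi)/2 with htq_def
      have h1 : t < min 1 hi := lt_min ht1 hphi
      have htq1 : t < tq := by rw [htq_def]; linarith
      have htq2 : tq < min 1 hi := by rw [htq_def]; linarith
      set q := A + tq • (B - A) with hq_def
      have hqAB : q ∈ openSegment ℝ A B := by
        have := param_mem A (B - A) (t₁ := 0) (t₂ := 1)
          (lt_trans ht0 htq1) (lt_of_lt_of_le htq2 (min_le_left _ _))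
        rw [zero_smul, add_zero, one_smul, show A + (B - A) = B from by module] at this
        exact this
      have hqDE : q ∈ openSegment ℝ D E := by
        have hlotq : lo < tq := lt_trans hplo htq1
        have htqhi : tq < hi := lt_of_lt_of_le htq2 (min_le_right _ _)
        rcases htDE.lt_or_gt with h|h
        · have := param_mem A (B - A) (t₁ := tD) (t₂ := tE)
            (by rw [hlo_def, min_eq_left h.le] at hlotq; exact hlotq)
            (by rw [hhi_def, max_eq_right h.le] at htqhi; exact htqhi)
          rw [← htD, ← htE] at this
          exact this
        · have := param_mem A (B - A) (t₁ := tE) (t₂ := tD)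
            (by rw [hlo_def, min_eq_right h.le] at hlotq; exact hlotq)
            (by rw [hhi_def, max_eq_left h.le] at htqhi; exact htqhi)
          rw [← htD, ← htE, ← openSegment_symm] at this
          exact this
      have hpq : p = q := hsub ⟨hpAB, hpDE⟩ ⟨hqAB, hqDE⟩
      have : t = tq := param_inj hw (by rw [← hpw, ← hq_def, hpq])
      exact absurd this htq1.ne
    · -- main case
      have hE' : cc A B C E < 0 := by nlinarith
      exact geom_main hσ hsub hABEF hABFD hBCDE hBCEF hBCFD hCADE hCAEF hCAFD
        hADE hAEF hAFD hBDE hBEF hBFD hCDE hCEF hCFD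
        hDAB hDBC hDCA hEAB hEBC hECA hFAB hFBC hFCA
        hDA hDB hDC hEA hEB hEC hFA hFB hFC
        hpAB hpDE hD' hE'

lemma edgeSeg_mk {V : Type*} (ρ : V → ℝ × ℝ) (u v : V) :
    edgeSeg ρ s(u, v) = openSegment ℝ (ρ u) (ρ v) := rfl

lemma crosses_of_ne {V : Type*} (ρ : V → ℝ × ℝ) {x y u v : V}
    (h1 : x ≠ u) (h2 : x ≠ v) (h3 : y ≠ u) (h4 : y ≠ v)
    (hne : (openSegment ℝ (ρ x) (ρ y) ∩ openSegment ℝ (ρ u) (ρ v)).Nonempty) :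
    Crosses ρ s(x, y) s(u, v) := by
  refine ⟨?_, hne⟩
  intro w hw hw'
  rw [Sym2.mem_iff] at hw hw'
  rcases hw with rfl|rfl <;> rcases hw' with rfl|rfl <;> simp_all

lemma core {V : Type*} {G : SimpleGraph V} {ρ : V → ℝ × ℝ} (hρ : IsICPlanarDrawing G ρ)
    {a b c d e f : V}
    (hab : G.Adj a b) (hbc : G.Adj b c) (hca : G.Adj c a)
    (hde : G.Adj d e) (hef : G.Adj e f) (hfd : G.Adj f d)
    (had : a ≠ d) (hae : a ≠ e) (haf : a ≠ f)
    (hbd : b ≠ d) (hbe : b ≠ e) (hbf : b ≠ f)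
    (hcd : c ≠ d) (hce : c ≠ e) (hcf : c ≠ f)
    (H : Crosses ρ s(a, b) s(d, e)) : False := by
  obtain ⟨hsl, huniq, hmatch⟩ := hρ
  have eab : s(a,b) ∈ G.edgeSet := G.mem_edgeSet.2 hab
  have ebc : s(b,c) ∈ G.edgeSet := G.mem_edgeSet.2 hbc
  have eca : s(c,a) ∈ G.edgeSet := G.mem_edgeSet.2 hca
  have ede : s(d,e) ∈ G.edgeSet := G.mem_edgeSet.2 hde
  have eef : s(e,f) ∈ G.edgeSet := G.mem_edgeSet.2 hef
  have efd : s(f,d) ∈ G.edgeSet := G.mem_edgeSet.2 hfd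
  have nvoe : ∀ x y v : V, G.Adj x y → v ≠ x → v ≠ y →
      ρ v ∉ openSegment ℝ (ρ x) (ρ y) := by
    intro x y v hxy h1 h2
    have := hsl.no_vertex_on_edge s(x,y) (G.mem_edgeSet.2 hxy) v
      (by rw [Sym2.mem_iff]; push_neg; exact ⟨h1, h2⟩)
    rw [edgeSeg_mk] at this; exact this
  have hABEF : openSegment ℝ (ρ a) (ρ b) ∩ openSegment ℝ (ρ e) (ρ f) = ∅ := by
    by_contra h
    have hne := Set.nonempty_iff_ne_empty.2 h
    have hc : Crosses ρ s(a,b) s(e,f) := crosses_of_ne ρ hae haf hbe hbf hne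
    have heq := huniq s(a,b) eab s(d,e) ede s(e,f) eef H hc
    rw [Sym2.eq_iff] at heq
    rcases heq with ⟨h1, _⟩|⟨h1, _⟩
    · exact hde.ne h1
    · exact hfd.ne h1.symm
  have hABFD : openSegment ℝ (ρ a) (ρ b) ∩ openSegment ℝ (ρ f) (ρ d) = ∅ := by
    by_contra h
    have hne := Set.nonempty_iff_ne_empty.2 h
    have hc : Crosses ρ s(a,b) s(f,d) := crosses_of_ne ρ haf had hbf hbd hne
    have heq := huniq s(a,b) eab s(d,e) ede s(f,d) efd H hc
    rw [Sym2.eq_iff] at heq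
    rcases heq with ⟨_, h2⟩|⟨_, h2⟩
    · exact hde.ne' h2
    · exact hef.ne h2
  have hbc_un : ∀ u v : V, G.Adj u v → b ≠ u → b ≠ v → c ≠ u → c ≠ v →
      openSegment ℝ (ρ b) (ρ c) ∩ openSegment ℝ (ρ u) (ρ v) = ∅ := by
    intro u v huv h1 h2 h3 h4
    by_contra h
    have hne := Set.nonempty_iff_ne_empty.2 h
    have hc : Crosses ρ s(b,c) s(u,v) := crosses_of_ne ρ h1 h2 h3 h4 hne
    have hnebc : s(a,b) ≠ s(b,c) := by
      rw [Ne, Sym2.eq_iff]; push_neg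
      exact ⟨fun h' => absurd h' hab.ne, fun h' => (hca.ne h'.symm).elim⟩
    exact hmatch s(a,b) eab s(b,c) ebc ⟨s(d,e), ede, H⟩ ⟨s(u,v), G.mem_edgeSet.2 huv, hc⟩
      hnebc b (by simp) (by simp)
  have hca_un : ∀ u v : V, G.Adj u v → c ≠ u → c ≠ v → a ≠ u → a ≠ v →
      openSegment ℝ (ρ c) (ρ a) ∩ openSegment ℝ (ρ u) (ρ v) = ∅ := by
    intro u v huv h1 h2 h3 h4
    by_contra h
    have hne := Set.nonempty_iff_ne_empty.2 h
    have hc : Crosses ρ s(c,a) s(u,v) := crosses_of_ne ρ h1 h2 h3 h4 hne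
    have hneca : s(a,b) ≠ s(c,a) := by
      rw [Ne, Sym2.eq_iff]; push_neg
      exact ⟨fun h' => (hca.ne h'.symm).elim, fun _ => hbc.ne⟩
    exact hmatch s(a,b) eab s(c,a) eca ⟨s(d,e), ede, H⟩ ⟨s(u,v), G.mem_edgeSet.2 huv, hc⟩
      hneca a (by simp) (by simp)
  have hsub : (openSegment ℝ (ρ a) (ρ b) ∩ openSegment ℝ (ρ d) (ρ e)).Subsingleton := by
    have := hsl.meet_at_most_once s(a,b) eab s(d,e) ede H.1
    rw [edgeSeg_mk, edgeSeg_mk] at this; exact this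
  obtain ⟨p, hp1, hp2⟩ := H.2
  rw [edgeSeg_mk] at hp1 hp2
  have inj := hsl.inj
  exact geom (inj.ne hab.ne) (inj.ne hde.ne) hsub hABEF hABFD
    (hbc_un d e hde hbd hbe hcd hce) (hbc_un e f hef hbe hbf hce hcf)
    (hbc_un f d hfd hbf hbd hcf hcd)
    (hca_un d e hde hcd hce had hae) (hca_un e f hef hce hcf hae haf)
    (hca_un f d hfd hcf hcd haf had)
    (nvoe d e a hde had hae) (nvoe e f a hef hae haf) (nvoe f d a hfd haf had)
    (nvoe d e b hde hbd hbe) (nvoe e f b hef hbe hbf) (nvoe f d b hfd hbf hbd)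
    (nvoe d e c hde hcd hce) (nvoe e f c hef hce hcf) (nvoe f d c hfd hcf hcd)
    (nvoe a b d hab had.symm hbd.symm) (nvoe b c d hbc hbd.symm hcd.symm)
    (nvoe c a d hca hcd.symm had.symm)
    (nvoe a b e hab hae.symm hbe.symm) (nvoe b c e hbc hbe.symm hce.symm)
    (nvoe c a e hca hce.symm hae.symm)
    (nvoe a b f hab haf.symm hbf.symm) (nvoe b c f hbc hbf.symm hcf.symm)
    (nvoe c a f hca hcf.symm haf.symm)
    (inj.ne had.symm) (inj.ne hbd.symm) (inj.ne hcd.symm)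
    (inj.ne hae.symm) (inj.ne hbe.symm) (inj.ne hce.symm)
    (inj.ne haf.symm) (inj.ne hbf.symm) (inj.ne hcf.symm)
    hp1 hp2

end DTC

/-- In an IC-planar straight-line drawing, no edge of a 3-cycle
crosses an edge of a vertex-disjoint 3-cycle. -/
theorem disjoint_triangles_do_not_cross {V : Type*} [Fintype V] (G : SimpleGraph V)
    (ρ : V → ℝ × ℝ) (hρ : IsICPlanarDrawing G ρ) (a b c d e f : V)
    (hab : G.Adj a b) (hbc : G.Adj b c) (hca : G.Adj c a)
    (hde : G.Adj d e) (hef : G.Adj e f) (hfd : G.Adj f d)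
    (hdisj : ({a, b, c} : Set V) ∩ ({d, e, f} : Set V) = ∅) :
    ∀ e₁ ∈ ({s(a, b), s(b, c), s(c, a)} : Set (Sym2 V)),
      ∀ e₂ ∈ ({s(d, e), s(e, f), s(f, d)} : Set (Sym2 V)),
        ¬ Crosses ρ e₁ e₂ := by
  have hsep : ∀ x ∈ ({a, b, c} : Set V), ∀ y ∈ ({d, e, f} : Set V), x ≠ y := by
    intro x hx y hy hxy
    subst hxy
    have : x ∈ ({a, b, c} : Set V) ∩ ({d, e, f} : Set V) := ⟨hx, hy⟩
    rw [hdisj] at this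
    exact this
  have had : a ≠ d := hsep a (by simp) d (by simp)
  have hae : a ≠ e := hsep a (by simp) e (by simp)
  have haf : a ≠ f := hsep a (by simp) f (by simp)
  have hbd : b ≠ d := hsep b (by simp) d (by simp)
  have hbe : b ≠ e := hsep b (by simp) e (by simp)
  have hbf : b ≠ f := hsep b (by simp) f (by simp)
  have hcd : c ≠ d := hsep c (by simp) d (by simp)
  have hce : c ≠ e := hsep c (by simp) e (by simp)
  have hcf : c ≠ f := hsep c (by simp) f (by simp)
  intro e₁ he₁ e₂ he₂ H
  rcases he₁ with rfl|rfl|rfl <;> rcases he₂ with rfl|rfl|rfl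
  · exact core hρ hab hbc hca hde hef hfd had hae haf hbd hbe hbf hcd hce hcf H
  · exact core hρ hab hbc hca hef hfd hde hae haf had hbe hbf hbd hce hcf hcd H
  · exact core hρ hab hbc hca hfd hde hef haf had hae hbf hbd hbe hcf hcd hce H
  · exact core hρ hbc hca hab hde hef hfd hbd hbe hbf hcd hce hcf had hae haf H
  · exact core hρ hbc hca hab hef hfd hde hbe hbf hbd hce hcf hcd hae haf had H
  · exact core hρ hbc hca hab hfd hde hef hbf hbd hbe hcf hcd hce haf had hae H
  · exact core hρ hca hab hbc hde hef hfd hcd hce hcf had hae haf hbd hbe hbf H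
  · exact core hρ hca hab hbc hef hfd hde hce hcf hcd hae haf had hbe hbf hbd H
  · exact core hρ hca hab hbc hfd hde hef hcf hcd hce haf had hae hbf hbd hbe H
end
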